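/- arXiv:1910.06403 — 4 statements merged into one kernel-verified Lean document; each statement's English description precedes it below -/
import Mathlib

section
/- Suppose (ii) for every x ∈ X, α̂_N(x) → α(x) almost surely as N → ∞, and (iii) there exists an integrable function ℓ : ℝ^s → ℝ such that for almost every ε and all x, y ∈ X, |A(x, ε) − A(y, ε)| ≤ ℓ(ε)·dist(x, y). Then α̂_N* → α* almost surely, and dist(x̂_N, 𝒳*) → 0 almost surely. -/
open MeasureTheory ProbabilityTheory Filter Topology

private lemma saa_bdd_range {X : Type*} [TopologicalSpace X] [CompactSpace X] {f : X → ℝ}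
    (hf : Continuous f) : BddAbove (Set.range f) := by
  simpa [Set.image_univ] using (isCompact_univ.image hf).bddAbove

private lemma saa_ciSup_abs_sub_le {X : Type*} [Nonempty X] {f g : X → ℝ} {η : ℝ}
    (hf : BddAbove (Set.range f)) (hg : BddAbove (Set.range g))
    (h : ∀ x, |f x - g x| ≤ η) : |(⨆ x, f x) - ⨆ x, g x| ≤ η := by
  rw [abs_sub_le_iff]
  constructor
  · rw [sub_le_iff_le_add]
    refine ciSup_le fun x => ?_
    have h1 := (abs_sub_le_iff.mp (h x)).1
    have h2 : g x ≤ ⨆ x, g x := le_ciSup hg x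
    linarith
  · rw [sub_le_iff_le_add]
    refine ciSup_le fun x => ?_
    have h1 := (abs_sub_le_iff.mp (h x)).2
    have h2 : f x ≤ ⨆ x, f x := le_ciSup hf x
    linarith

/-- **SAA convergence (Homem-de-Mello).**
Let `(X, dist)` be a compact metric space, `(Ω, 𝓕, ℙ)` a probability space, and `(ε i)` an
i.i.d. sequence of `ℝ^s`-valued random vectors. Let `A : X × ℝ^s → ℝ` be jointly measurable,
continuous in `x`, with `α x := 𝔼[A x ε]` finite. Suppose (ii) the sample averages
`α̂ N x → α x` a.s. for each `x`, and (iii) an a.e. integrable Lipschitz modulus `ℓ`. Then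
the SAA optimal values converge a.s. to the true optimal value, and the distance from any
SAA maximizer to the true argmax set tends to `0` a.s. -/
theorem saa_convergence
    {X : Type*} [MetricSpace X] [CompactSpace X] [Nonempty X]
    [MeasurableSpace X] [BorelSpace X]
    {Ω : Type*} [MeasureSpace Ω] [IsProbabilityMeasure (ℙ : Measure Ω)]
    {s : ℕ} (ε : ℕ → Ω → EuclideanSpace ℝ (Fin s))
    (hεmeas : ∀ i, Measurable (ε i))
    (hindep : iIndepFun ε ℙ)
    (hident : ∀ i, IdentDistrib (ε i) (ε 0) ℙ ℙ)
    (A : X → EuclideanSpace ℝ (Fin s) → ℝ)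
    (hA : Measurable (Function.uncurry A))
    (hAcont : ∀ e, Continuous (fun x => A x e))
    (α : X → ℝ) (hα : ∀ x, Integrable (fun ω => A x (ε 0 ω)) ℙ)
    (hαdef : ∀ x, α x = ∫ ω, A x (ε 0 ω) ∂ℙ)
    (αhat : ℕ → X → Ω → ℝ)
    (hαhat : ∀ N x ω, αhat N x ω = (N : ℝ)⁻¹ * ∑ i ∈ Finset.range N, A x (ε i ω))
    -- (ii) pointwise almost sure convergence
    (hptwise : ∀ x, ∀ᵐ ω ∂ℙ, Tendsto (fun N => αhat N x ω) atTop (𝓝 (α x)))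
    -- (iii) integrable Lipschitz modulus
    (ℓ : EuclideanSpace ℝ (Fin s) → ℝ)
    (hℓint : Integrable ℓ (Measure.map (ε 0) ℙ))
    (hℓ : ∀ᵐ e ∂(Measure.map (ε 0) ℙ), ∀ x y : X, |A x e - A y e| ≤ ℓ e * dist x y)
    -- SAA maximizers
    (xhat : ℕ → Ω → X)
    (hxhat : ∀ N ω, ∀ y : X, αhat N y ω ≤ αhat N (xhat N ω) ω) :
    (∀ᵐ ω ∂ℙ, Tendsto (fun N => ⨆ x : X, αhat N x ω) atTop (𝓝 (⨆ x : X, α x))) ∧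
    (∀ᵐ ω ∂ℙ, Tendsto (fun N => Metric.infDist (xhat N ω) {x : X | ∀ y : X, α y ≤ α x})
      atTop (𝓝 0)) := by
  classical
  set μ := Measure.map (ε 0) ℙ with hμdef
  -- a measurable modification of ℓ
  obtain ⟨ℓ', hℓ'meas, hℓ'eq⟩ : ∃ ℓ' : EuclideanSpace ℝ (Fin s) → ℝ,
      Measurable ℓ' ∧ ℓ =ᵐ[μ] ℓ' :=
    ⟨hℓint.1.mk ℓ, hℓint.1.stronglyMeasurable_mk.measurable, hℓint.1.ae_eq_mk⟩
  have hℓ'2 : ∀ᵐ e ∂μ, ∀ x y : X, |A x e - A y e| ≤ ℓ' e * dist x y := by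
    filter_upwards [hℓ, hℓ'eq] with e h1 h2
    intro x y
    rw [← h2]
    exact h1 x y
  have hmap : ∀ i, Measure.map (ε i) ℙ = μ := fun i => (hident i).map_eq
  have hlip : ∀ i : ℕ, ∀ᵐ ω ∂ℙ,
      ∀ x y : X, |A x (ε i ω) - A y (ε i ω)| ≤ ℓ' (ε i ω) * dist x y := by
    intro i
    exact ae_of_ae_map (hεmeas i).aemeasurable (by rw [hmap i]; exact hℓ'2)
  -- the empirical Lipschitz constants and their a.s. limit
  set Lhat : ℕ → Ω → ℝ := fun N ω => (N : ℝ)⁻¹ * ∑ i ∈ Finset.range N, ℓ' (ε i ω) with hLhatdef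
  set L : ℝ := ∫ ω, ℓ' (ε 0 ω) ∂ℙ with hLdef
  have hYint : Integrable (fun ω => ℓ' (ε 0 ω)) ℙ := by
    have h1 : Integrable ℓ' μ := hℓint.congr hℓ'eq
    exact (integrable_map_measure hℓ'meas.aestronglyMeasurable (hεmeas 0).aemeasurable).mp h1
  have hLhat : ∀ᵐ ω ∂ℙ, Tendsto (fun N => Lhat N ω) atTop (𝓝 L) := by
    have h := strong_law_ae_real (fun i ω => ℓ' (ε i ω)) hYint
      (fun i j hij => (hindep.indepFun hij).comp hℓ'meas hℓ'meas)
      (fun i => (hident i).comp hℓ'meas)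
    filter_upwards [h] with ω hω
    refine hω.congr fun N => ?_
    rw [hLhatdef]
    ring
  -- α is Lipschitz with constant L
  have hαlip : ∀ x y : X, |α x - α y| ≤ L * dist x y := by
    intro x y
    rw [hαdef x, hαdef y, ← integral_sub (hα x) (hα y)]
    have h1 : |∫ ω, (A x (ε 0 ω) - A y (ε 0 ω)) ∂ℙ| ≤
        ∫ ω, |A x (ε 0 ω) - A y (ε 0 ω)| ∂ℙ := by
      simpa [Real.norm_eq_abs] using
        norm_integral_le_integral_norm (fun ω => A x (ε 0 ω) - A y (ε 0 ω)) (μ := ℙ)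
    refine h1.trans ?_
    have h2 : ∫ ω, |A x (ε 0 ω) - A y (ε 0 ω)| ∂ℙ ≤ ∫ ω, ℓ' (ε 0 ω) * dist x y ∂ℙ := by
      refine integral_mono_ae ((hα x).sub (hα y)).abs (hYint.mul_const _) ?_
      filter_upwards [hlip 0] with ω hω using hω x y
    refine h2.trans ?_
    rw [integral_mul_const]
  have hαcont : Continuous α := by
    refine LipschitzWith.continuous (K := Real.toNNReal L) ?_
    refine LipschitzWith.of_dist_le_mul fun x y => ?_
    rw [Real.dist_eq]
    exact (hαlip x y).trans
      (mul_le_mul_of_nonneg_right (Real.le_coe_toNNReal L) dist_nonneg)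
  -- empirical functions are Lipschitz with constant Lhat
  have hhatlip : ∀ ω, (∀ i : ℕ, ∀ x y : X,
      |A x (ε i ω) - A y (ε i ω)| ≤ ℓ' (ε i ω) * dist x y) →
      ∀ N (x y : X), |αhat N x ω - αhat N y ω| ≤ Lhat N ω * dist x y := by
    intro ω hω N x y
    rw [hαhat, hαhat, ← mul_sub, ← Finset.sum_sub_distrib, abs_mul,
      abs_of_nonneg (by positivity : (0:ℝ) ≤ (N:ℝ)⁻¹)]
    calc (N:ℝ)⁻¹ * |∑ i ∈ Finset.range N, (A x (ε i ω) - A y (ε i ω))|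
        ≤ (N:ℝ)⁻¹ * ∑ i ∈ Finset.range N, |A x (ε i ω) - A y (ε i ω)| :=
          mul_le_mul_of_nonneg_left (Finset.abs_sum_le_sum_abs _ _) (by positivity)
      _ ≤ (N:ℝ)⁻¹ * ∑ i ∈ Finset.range N, ℓ' (ε i ω) * dist x y :=
          mul_le_mul_of_nonneg_left (Finset.sum_le_sum fun i _ => hω i x y) (by positivity)
      _ = Lhat N ω * dist x y := by
          rw [hLhatdef, ← Finset.sum_mul, mul_assoc]
  -- continuity and boundedness of the empirical functions
  have hαhatcont : ∀ N ω, Continuous (fun x => αhat N x ω) := by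
    intro N ω
    have heq : (fun x => αhat N x ω) =
        fun x => (N : ℝ)⁻¹ * ∑ i ∈ Finset.range N, A x (ε i ω) := funext fun x => hαhat N x ω
    rw [heq]
    exact continuous_const.mul (continuous_finset_sum _ fun i _ => hAcont (ε i ω))
  have hbα : BddAbove (Set.range α) := saa_bdd_range hαcont
  have hbhat : ∀ N ω, BddAbove (Set.range fun x => αhat N x ω) :=
    fun N ω => saa_bdd_range (hαhatcont N ω)
  -- countable dense subset
  obtain ⟨D, hDcount, hDdense⟩ := TopologicalSpace.exists_countable_dense X
  haveI := hDcount.to_subtype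
  -- the key: a.s. uniform convergence
  have hunif : ∀ᵐ ω ∂ℙ, ∀ η > (0:ℝ), ∀ᶠ N in atTop, ∀ x : X, |αhat N x ω - α x| ≤ η := by
    have hgood : ∀ᵐ ω ∂ℙ, (∀ d : D, Tendsto (fun N => αhat N (d : X) ω) atTop (𝓝 (α d))) ∧
        Tendsto (fun N => Lhat N ω) atTop (𝓝 L) ∧
        ∀ i : ℕ, ∀ x y : X, |A x (ε i ω) - A y (ε i ω)| ≤ ℓ' (ε i ω) * dist x y :=
      (ae_all_iff.2 fun d : D => hptwise (d : X)).and (hLhat.and (ae_all_iff.2 hlip))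
    filter_upwards [hgood] with ω hω η hη
    obtain ⟨hD, hL, hlipω⟩ := hω
    set C : ℝ := |L| + 1 with hCdef
    have hC : 0 < C := by positivity
    set r : ℝ := η / (3 * C) with hrdef
    have hr : 0 < r := by positivity
    have hCr : C * r = η / 3 := by
      rw [hrdef]
      field_simp
    -- finite subcover by balls of radius r centered in D
    have hcover : (Set.univ : Set X) ⊆ ⋃ d : D, Metric.ball (d : X) r := by
      intro x _
      have hx : x ∈ closure D := hDdense x
      obtain ⟨d, hdD, hdd⟩ := Metric.mem_closure_iff.mp hx r hr
      exact Set.mem_iUnion.2 ⟨⟨d, hdD⟩, Metric.mem_ball.2 hdd⟩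
    obtain ⟨t, ht⟩ := isCompact_univ.elim_finite_subcover
      (fun d : D => Metric.ball (d : X) r) (fun d => Metric.isOpen_ball) hcover
    -- eventual bounds
    have h1 : ∀ᶠ N in atTop, ∀ d ∈ t, |αhat N (d : X) ω - α (d : X)| ≤ η / 3 := by
      rw [eventually_all_finset]
      intro d _
      have := Metric.tendsto_atTop.mp (hD d) (η / 3) (by positivity)
      obtain ⟨N₀, hN₀⟩ := this
      refine eventually_atTop.2 ⟨N₀, fun n hn => ?_⟩
      have := hN₀ n hn
      rw [Real.dist_eq] at this
      linarith
    have h2 : ∀ᶠ N in atTop, Lhat N ω ≤ C := by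
      refine hL.eventually_le_const ?_
      have : L ≤ |L| := le_abs_self L
      linarith
    filter_upwards [h1, h2] with N hN1 hN2
    intro x
    obtain ⟨d, hdt, hxd⟩ : ∃ d ∈ t, x ∈ Metric.ball (d : X) r := by
      have := ht (Set.mem_univ x)
      simpa using this
    have hdx : dist x (d : X) < r := Metric.mem_ball.mp hxd
    have e1 : |αhat N x ω - αhat N (d : X) ω| ≤ η / 3 := by
      have := hhatlip ω hlipω N x (d : X)
      have hb : Lhat N ω * dist x (d : X) ≤ C * r := by
        calc Lhat N ω * dist x (d : X) ≤ C * dist x (d : X) :=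
              mul_le_mul_of_nonneg_right hN2 dist_nonneg
          _ ≤ C * r := by nlinarith [dist_nonneg (x := x) (y := (d : X))]
      linarith [hCr ▸ hb, this]
    have e2 : |αhat N (d : X) ω - α (d : X)| ≤ η / 3 := hN1 d hdt
    have e3 : |α (d : X) - α x| ≤ η / 3 := by
      have := hαlip (d : X) x
      have hL' : L ≤ C := by
        have : L ≤ |L| := le_abs_self L
        linarith
      have hb : L * dist (d : X) x ≤ C * r := by
        rw [dist_comm]
        calc L * dist x (d : X) ≤ C * dist x (d : X) :=
              mul_le_mul_of_nonneg_right hL' dist_nonneg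
          _ ≤ C * r := by nlinarith [dist_nonneg (x := x) (y := (d : X))]
      linarith [hCr ▸ hb, this]
    calc |αhat N x ω - α x|
        ≤ |αhat N x ω - αhat N (d : X) ω| + |αhat N (d : X) ω - α (d : X)|
          + |α (d : X) - α x| := by
            have := abs_sub_le (αhat N x ω) (αhat N (d : X) ω) (α x)
            have h' := abs_sub_le (αhat N (d : X) ω) (α (d : X)) (α x)
            linarith
      _ ≤ η := by linarith
  -- the argmax set of α
  set S : Set X := {x : X | ∀ y : X, α y ≤ α x} with hSdef
  obtain ⟨xs, -, hxs⟩ := isCompact_univ.exists_isMaxOn Set.univ_nonempty hαcont.continuousOn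
  have hxsS : xs ∈ S := fun y => hxs (Set.mem_univ y)
  have hSclosed : IsClosed S := by
    have : S = ⋂ y : X, {x : X | α y ≤ α x} := by
      ext x; simp [hSdef, Set.mem_iInter]
    rw [this]
    exact isClosed_iInter fun y => isClosed_le continuous_const hαcont
  constructor
  · -- convergence of optimal values
    filter_upwards [hunif] with ω hω
    rw [Metric.tendsto_atTop]
    intro e he
    obtain ⟨N₀, hN₀⟩ := eventually_atTop.mp (hω (e / 2) (by positivity))
    refine ⟨N₀, fun n hn => ?_⟩
    have := saa_ciSup_abs_sub_le (hbhat n ω) hbα (hN₀ n hn)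
    rw [Real.dist_eq]
    linarith
  · -- convergence of maximizers to the argmax set
    filter_upwards [hunif] with ω hω
    rw [Metric.tendsto_atTop]
    intro e he
    suffices h : ∃ N₀, ∀ n ≥ N₀, Metric.infDist (xhat n ω) S < e by
      obtain ⟨N₀, hN₀⟩ := h
      refine ⟨N₀, fun n hn => ?_⟩
      rw [Real.dist_eq, sub_zero, abs_of_nonneg Metric.infDist_nonneg]
      exact hN₀ n hn
    set K : Set X := {x : X | e ≤ Metric.infDist x S} with hKdef
    by_cases hK : K.Nonempty
    · have hKclosed : IsClosed K :=
        isClosed_le continuous_const (Metric.continuous_infDist_pt S)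
      have hKcompact : IsCompact K := hKclosed.isCompact
      obtain ⟨z, hzK, hz⟩ := hKcompact.exists_isMaxOn hK hαcont.continuousOn
      have hzS : z ∉ S := by
        intro h
        have h0 : Metric.infDist z S = 0 := Metric.infDist_zero_of_mem h
        have := hzK
        rw [hKdef, Set.mem_setOf_eq, h0] at this
        linarith
      have hzlt : α z < α xs := by
        rcases lt_or_eq_of_le (hxsS z) with h | h
        · exact h
        · exact absurd (fun y => (hxsS y).trans h.ge) hzS
      set δ : ℝ := (α xs - α z) / 3 with hδdef
      have hδ : 0 < δ := by rw [hδdef]; linarith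
      obtain ⟨N₀, hN₀⟩ := eventually_atTop.mp (hω δ hδ)
      refine ⟨N₀, fun n hn => ?_⟩
      by_contra hcon
      push_neg at hcon
      have hxK : xhat n ω ∈ K := hcon
      have hle : α (xhat n ω) ≤ α z := hz hxK
      have b1 : |αhat n xs ω - α xs| ≤ δ := hN₀ n hn xs
      have b2 : |αhat n (xhat n ω) ω - α (xhat n ω)| ≤ δ := hN₀ n hn (xhat n ω)
      have b3 : αhat n xs ω ≤ αhat n (xhat n ω) ω := hxhat n ω xs
      rw [abs_sub_le_iff] at b1 b2
      have := b1.2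
      have := b2.1
      rw [hδdef] at *
      linarith
    · refine ⟨0, fun n _ => ?_⟩
      rw [Set.not_nonempty_iff_eq_empty] at hK
      by_contra hcon
      push_neg at hcon
      have : xhat n ω ∈ K := hcon
      rw [hK] at this
      exact this
end

section
/- Suppose, in addition to the hypotheses of the sample average approximation convergence theorem (pointwise almost sure convergence α̂_N(x) → α(x) for each x, and the Lipschitz condition |A(x, ε) − A(y, ε)| ≤ ℓ(ε)·dist(x, y) with ℓ integrable), that (i) the base samples (ε_i) are i.i.d., (ii) for every x ∈ X the moment generating function t ↦ 𝔼[exp(t·A(x, ε))] is finite in an open neighborhood of t = 0, and (iii) the moment generating function t ↦ 𝔼[exp(t·ℓ(ε))] is finite in an open neighborhood of t = 0. Then for every δ > 0 there exist K < ∞ and β > 0 such that ℙ(dist(x̂_N, 𝒳*) > δ) ≤ K·e^{−βN} for all N ≥ 1. -/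
open MeasureTheory ProbabilityTheory Filter Topology

lemma abs_exp_sub_one_le' (u : ℝ) : |Real.exp u - 1| ≤ |u| * Real.exp |u| := by
  rcases le_or_gt 0 u with hu | hu
  · rw [abs_of_nonneg (by simpa using Real.one_le_exp hu : (0:ℝ) ≤ Real.exp u - 1),
      abs_of_nonneg hu]
    have h1 : 1 - u ≤ Real.exp (-u) := by
      have := Real.add_one_le_exp (-u); linarith
    have h2 : Real.exp u * (1 - Real.exp (-u)) ≤ Real.exp u * u := by
      have := Real.exp_pos u
      nlinarith
    have h3 : Real.exp u * (1 - Real.exp (-u)) = Real.exp u - 1 := by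
      rw [mul_sub, mul_one, ← Real.exp_add]; simp
    linarith
  · have h1' : 1 + u ≤ Real.exp u := by have := Real.add_one_le_exp u; linarith
    have hlt : Real.exp u < 1 := by simpa using Real.exp_lt_one_iff.mpr hu
    rw [abs_of_nonpos (by linarith), abs_of_neg hu]
    have : 1 - Real.exp u ≤ -u := by linarith
    have he : (1:ℝ) ≤ Real.exp (-u) := Real.one_le_exp (by linarith)
    nlinarith

lemma self_le_exp_mul {c y : ℝ} (hc : 0 < c) : y ≤ c⁻¹ * Real.exp (c * y) := by
  have := Real.add_one_le_exp (c * y)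
  have h : c * y ≤ Real.exp (c * y) := by linarith
  calc y = c⁻¹ * (c * y) := by field_simp
    _ ≤ c⁻¹ * Real.exp (c * y) := by
        exact mul_le_mul_of_nonneg_left h (by positivity)

/-- Chernoff-type exponential bound for iid sums with mgf finite near 0 and
nonpositive mean. -/
lemma chernoff_iid {Ω : Type*} [MeasureSpace Ω] [IsProbabilityMeasure (ℙ : Measure Ω)]
    (Y : ℕ → Ω → ℝ) (hmeas : ∀ i, Measurable (Y i))
    (hindep : iIndepFun Y ℙ)
    (hident : ∀ i, IdentDistrib (Y i) (Y 0) ℙ ℙ)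
    (hint : Integrable (Y 0) ℙ) (hmean : ∫ ω, Y 0 ω ∂ℙ ≤ 0)
    {a : ℝ} (ha : 0 < a) {t₀ : ℝ} (ht₀ : 0 < t₀)
    (hmgf : ∀ t : ℝ, |t| < t₀ → Integrable (fun ω => Real.exp (t * Y 0 ω)) ℙ) :
    ∃ β > (0:ℝ), ∀ N : ℕ, 1 ≤ N →
      (ℙ {ω | (N : ℝ) * a ≤ ∑ i ∈ Finset.range N, Y i ω}).toReal ≤ Real.exp (-β * N) := by
  set t₁ : ℝ := t₀ / 2 with ht₁def
  set t₂ : ℝ := 3 * t₀ / 4 with ht₂def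
  have ht₁ : 0 < t₁ := by positivity
  have ht₂ : 0 < t₂ := by positivity
  have h12 : t₁ < t₂ := by rw [ht₁def, ht₂def]; linarith
  have h2lt : t₂ < t₀ := by rw [ht₂def]; linarith
  -- the dominating function
  set g : Ω → ℝ := fun ω => (t₂ - t₁)⁻¹ *
      (Real.exp (t₂ * Y 0 ω) + Real.exp (-t₂ * Y 0 ω)) with hgdef
  have hgint : Integrable g ℙ := by
    refine Integrable.const_mul ?_ _
    exact (hmgf t₂ (by rw [abs_of_pos ht₂]; exact h2lt)).add
      (hmgf (-t₂) (by rw [abs_neg, abs_of_pos ht₂]; exact h2lt))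
  -- sequence tₙ → 0⁺
  set T : ℕ → ℝ := fun n => t₁ / (n + 1) with hTdef
  have hTpos : ∀ n, 0 < T n := fun n => by positivity
  have hTle : ∀ n, T n ≤ t₁ := fun n => by
    rw [hTdef]
    rw [div_le_iff₀ (by positivity)]
    have : (0:ℝ) ≤ (n:ℝ) := Nat.cast_nonneg n
    nlinarith [ht₁.le]
  have hTlt : ∀ n, T n < t₀ := fun n => lt_of_le_of_lt (hTle n) (by rw [ht₁def]; linarith)
  -- Step 1: find a small `t` with `mgf (Y 0) ℙ t ≤ exp (t * (a/2))`
  have hgm : ∀ t : ℝ, Measurable fun y : ℝ => Real.exp (t * y) :=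
    fun t => (measurable_const_mul t).exp
  have key : ∃ t : ℝ, 0 < t ∧ t < t₀ ∧ mgf (Y 0) ℙ t ≤ Real.exp (t * (a / 2)) := by
    set F : ℕ → Ω → ℝ := fun n ω => (Real.exp (T n * Y 0 ω) - 1) / T n with hFdef
    have hconv : Tendsto (fun n => ∫ ω, F n ω ∂ℙ) atTop (𝓝 (∫ ω, Y 0 ω ∂ℙ)) := by
      refine tendsto_integral_of_dominated_convergence g
        (fun n => ?_) hgint (fun n => ?_) ?_
      · exact ((((hmeas 0).const_mul (T n)).exp.sub measurable_const).div_const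
          (T n)).aestronglyMeasurable
      · refine Filter.Eventually.of_forall fun ω => ?_
        set y := Y 0 ω with hy
        have h1 : |Real.exp (T n * y) - 1| ≤ |T n * y| * Real.exp |T n * y| :=
          abs_exp_sub_one_le' _
        have hTn := hTpos n
        have habs : |T n * y| = T n * |y| := by
          rw [abs_mul, abs_of_pos hTn]
        have h2 : Real.exp (T n * |y|) ≤ Real.exp (t₁ * |y|) :=
          Real.exp_le_exp.mpr (mul_le_mul_of_nonneg_right (hTle n) (abs_nonneg y))
        have h3 : ‖F n ω‖ ≤ |y| * Real.exp (t₁ * |y|) := by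
          rw [hFdef]
          simp only [Real.norm_eq_abs]
          rw [abs_div, abs_of_pos hTn, div_le_iff₀ hTn]
          calc |Real.exp (T n * y) - 1| ≤ T n * |y| * Real.exp (T n * |y|) := by
                rw [← habs]; exact h1
            _ ≤ T n * |y| * Real.exp (t₁ * |y|) := by
                exact mul_le_mul_of_nonneg_left h2 (by positivity)
            _ = |y| * Real.exp (t₁ * |y|) * T n := by ring
        have h4 : |y| ≤ (t₂ - t₁)⁻¹ * Real.exp ((t₂ - t₁) * |y|) :=
          self_le_exp_mul (by linarith)
        have h5 : |y| * Real.exp (t₁ * |y|) ≤ (t₂ - t₁)⁻¹ * Real.exp (t₂ * |y|) := by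
          calc |y| * Real.exp (t₁ * |y|)
              ≤ (t₂ - t₁)⁻¹ * Real.exp ((t₂ - t₁) * |y|) * Real.exp (t₁ * |y|) :=
                mul_le_mul_of_nonneg_right h4 (Real.exp_pos _).le
            _ = (t₂ - t₁)⁻¹ * Real.exp (t₂ * |y|) := by
                rw [mul_assoc, ← Real.exp_add]; ring_nf
        have h6 : Real.exp (t₂ * |y|) ≤ Real.exp (t₂ * y) + Real.exp (-t₂ * y) := by
          rcases le_or_gt 0 y with hy0 | hy0
          · rw [abs_of_nonneg hy0]
            nlinarith [(Real.exp_pos (-t₂ * y)).le]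
          · rw [abs_of_neg hy0]
            have : t₂ * -y = -t₂ * y := by ring
            rw [this]
            nlinarith [(Real.exp_pos (t₂ * y)).le]
        have h7 : (t₂ - t₁)⁻¹ * Real.exp (t₂ * |y|)
            ≤ (t₂ - t₁)⁻¹ * (Real.exp (t₂ * y) + Real.exp (-t₂ * y)) :=
          mul_le_mul_of_nonneg_left h6 (by
            have h : (0:ℝ) < t₂ - t₁ := by linarith
            positivity)
        exact h3.trans (h5.trans h7)
      · refine Filter.Eventually.of_forall fun ω => ?_
        set y := Y 0 ω with hy
        have hT0 : Tendsto T atTop (𝓝 0) := by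
          have h0 : Tendsto (fun n : ℕ => 1 / ((n : ℝ) + 1)) atTop (𝓝 0) :=
            tendsto_one_div_add_atTop_nhds_zero_nat
          have := h0.const_mul t₁
          simpa [hTdef, div_eq_mul_inv, mul_comm, one_div] using this
        have hTne : Tendsto T atTop (𝓝[≠] (0:ℝ)) := by
          refine tendsto_nhdsWithin_of_tendsto_nhds_of_eventually_within _ hT0 ?_
          exact Filter.Eventually.of_forall fun n => (hTpos n).ne'
        have hderiv : HasDerivAt (fun t : ℝ => Real.exp (t * y)) y 0 := by
          have h := (hasDerivAt_mul_const y (x := (0:ℝ))).exp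
          simpa using h
        have hslope := hasDerivAt_iff_tendsto_slope.mp hderiv
        have := hslope.comp hTne
        refine this.congr fun n => ?_
        simp [Function.comp_apply, slope_def_field, hFdef, hy]
    have hconv' : Tendsto (fun n => ∫ ω, F n ω ∂ℙ) atTop (𝓝 (∫ ω, Y 0 ω ∂ℙ)) := hconv
    have hev : ∀ᶠ n in atTop, ∫ ω, F n ω ∂ℙ < a / 2 := by
      have hlt : (∫ ω, Y 0 ω ∂ℙ) < a / 2 := lt_of_le_of_lt hmean (by positivity)
      exact hconv'.eventually_lt_const hlt
    obtain ⟨n, hn⟩ := hev.exists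
    refine ⟨T n, hTpos n, hTlt n, ?_⟩
    have hintn : Integrable (fun ω => Real.exp (T n * Y 0 ω)) ℙ :=
      hmgf (T n) (by rw [abs_of_pos (hTpos n)]; exact hTlt n)
    have hI : ∫ ω, F n ω ∂ℙ = (mgf (Y 0) ℙ (T n) - 1) / T n := by
      simp only [hFdef, div_eq_mul_inv, mul_comm _ (T n)⁻¹]
      rw [integral_const_mul, integral_sub hintn (integrable_const 1)]
      simp [mgf, mul_comm]
    rw [hI] at hn
    have hmgf_le : mgf (Y 0) ℙ (T n) ≤ 1 + T n * (a / 2) := by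
      have := (div_lt_iff₀ (hTpos n)).mp hn
      linarith
    calc mgf (Y 0) ℙ (T n) ≤ 1 + T n * (a / 2) := hmgf_le
      _ ≤ Real.exp (T n * (a / 2)) := by
          have := Real.add_one_le_exp (T n * (a / 2)); linarith
  obtain ⟨t, ht, htlt, hmgft⟩ := key
  refine ⟨t * a / 2, by positivity, fun N hN => ?_⟩
  have hinti : ∀ i, Integrable (fun ω => Real.exp (t * Y i ω)) ℙ := fun i =>
    ((hident i).comp (hgm t)).integrable_iff.mpr
      (hmgf t (by rw [abs_of_pos ht]; exact htlt))
  have hintN : Integrable (fun ω => Real.exp (t * (∑ i ∈ Finset.range N, Y i) ω)) ℙ :=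
    hindep.integrable_exp_mul_sum hmeas fun i _ => hinti i
  have hcher := measure_ge_le_exp_mul_mgf (μ := ℙ) (X := ∑ i ∈ Finset.range N, Y i)
    ((N : ℝ) * a) ht.le hintN
  have hsetEq : {ω | (N : ℝ) * a ≤ ∑ i ∈ Finset.range N, Y i ω}
      = {ω | (N : ℝ) * a ≤ (∑ i ∈ Finset.range N, Y i) ω} := by
    ext ω; simp [Finset.sum_apply]
  rw [hsetEq]
  refine hcher.trans ?_
  have hmgfi : ∀ i, mgf (Y i) ℙ t = mgf (Y 0) ℙ t := fun i =>
    ((hident i).comp (hgm t)).integral_eq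
  rw [hindep.mgf_sum hmeas]
  have hprod : ∏ i ∈ Finset.range N, mgf (Y i) ℙ t = (mgf (Y 0) ℙ t) ^ N := by
    rw [Finset.prod_congr rfl fun i _ => hmgfi i, Finset.prod_const, Finset.card_range]
  rw [hprod]
  have hpow : (mgf (Y 0) ℙ t) ^ N ≤ (Real.exp (t * (a / 2))) ^ N :=
    pow_le_pow_left₀ mgf_nonneg hmgft N
  calc Real.exp (-t * ((N:ℝ) * a)) * (mgf (Y 0) ℙ t) ^ N
      ≤ Real.exp (-t * ((N:ℝ) * a)) * (Real.exp (t * (a / 2))) ^ N :=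
        mul_le_mul_of_nonneg_left hpow (Real.exp_pos _).le
    _ = Real.exp (-(t * a / 2) * N) := by
        rw [← Real.exp_nat_mul, ← Real.exp_add]; ring_nf


set_option maxHeartbeats 1000000

/-- **Exponential convergence rate for SAA (Homem-de-Mello).**
In the SAA setting (i.i.d. base samples, pointwise a.s. convergence, integrable Lipschitz
modulus), if moreover for each `x` the moment generating function of `A x ε` is finite in a
neighborhood of `0`, and the moment generating function of `ℓ ε` is finite in a neighborhood
of `0`, then the distance of the SAA maximizer to the true argmax set decays to zero at an
exponential rate in probability:
`∀ δ > 0, ∃ K < ∞, β > 0, ℙ(dist(x̂_N, 𝒳*) > δ) ≤ K e^{-β N}` for all `N ≥ 1`. -/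
theorem saa_exponential_rate
    {X : Type*} [MetricSpace X] [CompactSpace X] [Nonempty X]
    [MeasurableSpace X] [BorelSpace X]
    {Ω : Type*} [MeasureSpace Ω] [IsProbabilityMeasure (ℙ : Measure Ω)]
    {s : ℕ} (ε : ℕ → Ω → EuclideanSpace ℝ (Fin s))
    (hεmeas : ∀ i, Measurable (ε i))
    -- (i) the base samples are i.i.d.
    (hindep : iIndepFun ε ℙ)
    (hident : ∀ i, IdentDistrib (ε i) (ε 0) ℙ ℙ)
    (A : X → EuclideanSpace ℝ (Fin s) → ℝ)
    (hA : Measurable (Function.uncurry A))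
    (hAcont : ∀ e, Continuous (fun x => A x e))
    (α : X → ℝ) (hα : ∀ x, Integrable (fun ω => A x (ε 0 ω)) ℙ)
    (hαdef : ∀ x, α x = ∫ ω, A x (ε 0 ω) ∂ℙ)
    (αhat : ℕ → X → Ω → ℝ)
    (hαhat : ∀ N x ω, αhat N x ω = (N : ℝ)⁻¹ * ∑ i ∈ Finset.range N, A x (ε i ω))
    -- pointwise almost sure convergence
    (hptwise : ∀ x, ∀ᵐ ω ∂ℙ, Tendsto (fun N => αhat N x ω) atTop (𝓝 (α x)))
    -- integrable Lipschitz modulus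
    (ℓ : EuclideanSpace ℝ (Fin s) → ℝ)
    (hℓint : Integrable ℓ (Measure.map (ε 0) ℙ))
    (hℓ : ∀ᵐ e ∂(Measure.map (ε 0) ℙ), ∀ x y : X, |A x e - A y e| ≤ ℓ e * dist x y)
    -- (ii) the mgf of `A x ε` is finite in an open neighborhood of `t = 0`
    (hmgfA : ∀ x : X, ∃ δ > (0 : ℝ), ∀ t : ℝ, |t| < δ →
      Integrable (fun ω => Real.exp (t * A x (ε 0 ω))) ℙ)
    -- (iii) the mgf of `ℓ ε` is finite in an open neighborhood of `t = 0`
    (hmgfℓ : ∃ δ > (0 : ℝ), ∀ t : ℝ, |t| < δ →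
      Integrable (fun ω => Real.exp (t * ℓ (ε 0 ω))) ℙ)
    -- SAA maximizers
    (xhat : ℕ → Ω → X)
    (hxhat : ∀ N ω, ∀ y : X, αhat N y ω ≤ αhat N (xhat N ω) ω) :
    ∀ δ > (0 : ℝ), ∃ K : ℝ, ∃ β > (0 : ℝ), ∀ N : ℕ, 1 ≤ N →
      (ℙ {ω | Metric.infDist (xhat N ω) {x : X | ∀ y : X, α y ≤ α x} > δ}).toReal ≤
        K * Real.exp (-β * N) := by
  classical
  intro δ hδ
  set μ : Measure (EuclideanSpace ℝ (Fin s)) := Measure.map (ε 0) ℙ with hμdef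
  -- measurable nonnegative modification of ℓ
  set ℓ₁ : EuclideanSpace ℝ (Fin s) → ℝ := hℓint.1.mk ℓ with hℓ₁def
  have hℓ₁meas : Measurable ℓ₁ := hℓint.1.stronglyMeasurable_mk.measurable
  have hℓ₁ae : ℓ =ᵐ[μ] ℓ₁ := hℓint.1.ae_eq_mk
  set ℓ₀ : EuclideanSpace ℝ (Fin s) → ℝ := fun e => max (ℓ₁ e) 0 with hℓ₀def
  have hℓ₀meas : Measurable ℓ₀ := hℓ₁meas.max measurable_const
  have hℓ₀nonneg : ∀ e, 0 ≤ ℓ₀ e := fun e => le_max_right _ _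
  have hℓ₀int : Integrable ℓ₀ μ := ((integrable_congr hℓ₁ae).mp hℓint).pos_part
  have hℓ₀lip : ∀ᵐ e ∂μ, ∀ x y : X, |A x e - A y e| ≤ ℓ₀ e * dist x y := by
    filter_upwards [hℓ, hℓ₁ae] with e he hee x y
    refine (he x y).trans (mul_le_mul_of_nonneg_right ?_ dist_nonneg)
    rw [hee]; exact le_max_left _ _
  set L : ℝ := ∫ e, ℓ₀ e ∂μ with hLdef
  have hL0 : 0 ≤ L := integral_nonneg hℓ₀nonneg
  have hAz : ∀ z : X, Measurable (A z) := fun z => hA.comp measurable_prodMk_left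
  have hαint' : ∀ x : X, Integrable (fun e => A x e) μ := fun x =>
    (integrable_map_measure (hAz x).aestronglyMeasurable (hεmeas 0).aemeasurable).mpr (hα x)
  have hαeq : ∀ x : X, α x = ∫ e, A x e ∂μ := fun x => by
    rw [hαdef x, hμdef, integral_map (hεmeas 0).aemeasurable (hAz x).aestronglyMeasurable]
  -- Lipschitz property of α
  have hαlip : ∀ x y : X, |α x - α y| ≤ L * dist x y := by
    intro x y
    rw [hαeq x, hαeq y, ← integral_sub (hαint' x) (hαint' y)]
    have h1 : |∫ e, (A x e - A y e) ∂μ| ≤ ∫ e, |A x e - A y e| ∂μ := by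
      simpa [Real.norm_eq_abs] using
        norm_integral_le_integral_norm (μ := μ) (f := fun e => A x e - A y e)
    refine h1.trans ?_
    have h2 : ∫ e, |A x e - A y e| ∂μ ≤ ∫ e, ℓ₀ e * dist x y ∂μ := by
      refine integral_mono_ae ((hαint' x).sub (hαint' y)).abs (hℓ₀int.mul_const _) ?_
      filter_upwards [hℓ₀lip] with e he using he x y
    refine h2.trans_eq ?_
    rw [integral_mul_const]
  have hαcont : Continuous α := by
    refine LipschitzWith.continuous (K := Real.toNNReal L) ?_
    refine LipschitzWith.of_dist_le_mul fun x y => ?_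
    rw [Real.dist_eq]
    exact (hαlip x y).trans
      (mul_le_mul_of_nonneg_right (Real.le_coe_toNNReal L) dist_nonneg)
  set Xs : Set X := {x | ∀ y : X, α y ≤ α x} with hXsdef
  obtain ⟨xs, hxs⟩ : ∃ xs : X, ∀ y : X, α y ≤ α xs := by
    obtain ⟨xs, -, hxs⟩ := isCompact_univ.exists_isMaxOn ⟨Classical.arbitrary X, trivial⟩
      hαcont.continuousOn
    exact ⟨xs, fun y => hxs (Set.mem_univ y)⟩
  set S : Set X := {x | δ ≤ Metric.infDist x Xs} with hSdef
  have hSclosed : IsClosed S :=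
    isClosed_le continuous_const (Metric.continuous_infDist_pt Xs)
  by_cases hS : S.Nonempty
  swap
  · refine ⟨0, 1, one_pos, fun N hN => ?_⟩
    have hempty : {ω | Metric.infDist (xhat N ω) Xs > δ} = ∅ := by
      ext ω
      simp only [Set.mem_setOf_eq, Set.mem_empty_iff_false, iff_false, not_lt]
      by_contra h
      push_neg at h
      exact hS ⟨xhat N ω, le_of_lt h⟩
    rw [hempty]
    simp
  · obtain ⟨x₁, hx₁S, hx₁max'⟩ := hSclosed.isCompact.exists_isMaxOn hS hαcont.continuousOn
    have hx₁max : ∀ y ∈ S, α y ≤ α x₁ := fun y hy => hx₁max' hy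
    set η : ℝ := α xs - α x₁ with hηdef
    have hx₁notin : x₁ ∉ Xs := by
      intro hmem
      have h0 : Metric.infDist x₁ Xs = 0 := Metric.infDist_zero_of_mem hmem
      have : δ ≤ (0:ℝ) := h0 ▸ hx₁S
      linarith
    have hηpos : 0 < η := by
      simp only [hXsdef, Set.mem_setOf_eq, not_forall, not_le] at hx₁notin
      obtain ⟨y, hy⟩ := hx₁notin
      have := hxs y
      rw [hηdef]; linarith
    have hLpos : (0:ℝ) < 2 * L + 1 := by linarith
    set r : ℝ := η / (4 * (2 * L + 1)) with hrdef
    have hrpos : 0 < r := div_pos hηpos (by linarith)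
    clear_value η
    clear_value L
    obtain ⟨tset, -, htfin, htcover⟩ := finite_cover_balls_of_compact (X := X) isCompact_univ hrpos
    set T : Finset X := htfin.toFinset with hTdef
    have hTcover : ∀ x : X, ∃ z ∈ T, dist x z < r := by
      intro x
      have hx := htcover (Set.mem_univ x)
      rw [Set.mem_iUnion₂] at hx
      obtain ⟨z, hz, hzball⟩ := hx
      exact ⟨z, htfin.mem_toFinset.mpr hz, Metric.mem_ball.mp hzball⟩
    have hTne : T.Nonempty := by
      obtain ⟨z, hz, -⟩ := hTcover (Classical.arbitrary X)
      exact ⟨z, hz⟩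
    -- Chernoff bounds at net points (upper deviations)
    have hchern1 : ∀ z : X, ∃ β > (0:ℝ), ∀ N : ℕ, 1 ≤ N →
        (ℙ {ω | (N:ℝ) * (η/4) ≤
          ∑ i ∈ Finset.range N, (A z (ε i ω) - α z)}).toReal ≤ Real.exp (-β * N) := by
      intro z
      obtain ⟨δz, hδz, hmz⟩ := hmgfA z
      have hgm : Measurable fun e => A z e - α z := (hAz z).sub measurable_const
      refine chernoff_iid (fun i ω => A z (ε i ω) - α z)
        (fun i => hgm.comp (hεmeas i))
        (hindep.comp (fun _ e => A z e - α z) (fun _ => hgm))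
        (fun i => (hident i).comp hgm)
        ((hα z).sub (integrable_const _)) ?_ (by positivity) hδz ?_
      · rw [integral_sub (hα z) (integrable_const _), integral_const]
        simp [← hαdef z]
      · intro t ht
        have heq : (fun ω => Real.exp (t * (A z (ε 0 ω) - α z)))
            = fun ω => Real.exp (-(t * α z)) * Real.exp (t * A z (ε 0 ω)) := by
          funext ω; rw [← Real.exp_add]; ring_nf
        rw [heq]
        exact (hmz t ht).const_mul _
    -- Chernoff bound at xs (lower deviation)
    have hchern2 : ∃ β > (0:ℝ), ∀ N : ℕ, 1 ≤ N →
        (ℙ {ω | (N:ℝ) * (η/2) ≤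
          ∑ i ∈ Finset.range N, (α xs - A xs (ε i ω))}).toReal ≤ Real.exp (-β * N) := by
      obtain ⟨δz, hδz, hmz⟩ := hmgfA xs
      have hgm : Measurable fun e => α xs - A xs e := measurable_const.sub (hAz xs)
      refine chernoff_iid (fun i ω => α xs - A xs (ε i ω))
        (fun i => hgm.comp (hεmeas i))
        (hindep.comp (fun _ e => α xs - A xs e) (fun _ => hgm))
        (fun i => (hident i).comp hgm)
        ((integrable_const _).sub (hα xs)) ?_ (by positivity) hδz ?_
      · rw [integral_sub (integrable_const _) (hα xs), integral_const]
        simp [← hαdef xs]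
      · intro t ht
        have heq : (fun ω => Real.exp (t * (α xs - A xs (ε 0 ω))))
            = fun ω => Real.exp (t * α xs) * Real.exp (-t * A xs (ε 0 ω)) := by
          funext ω; rw [← Real.exp_add]; ring_nf
        rw [heq]
        refine Integrable.const_mul ?_ _
        exact hmz (-t) (by rwa [abs_neg])
    -- Chernoff bound for the Lipschitz modulus sums
    have hℓ₀pull : ∀ᵐ ω ∂ℙ, ℓ (ε 0 ω) = ℓ₁ (ε 0 ω) :=
      ae_of_ae_map (hεmeas 0).aemeasurable hℓ₁ae
    have hℓ₀intΩ : Integrable (fun ω => ℓ₀ (ε 0 ω)) ℙ :=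
      (integrable_map_measure hℓ₀meas.aestronglyMeasurable (hεmeas 0).aemeasurable).mp hℓ₀int
    have hLint : ∫ ω, ℓ₀ (ε 0 ω) ∂ℙ = L := by
      rw [hLdef, hμdef, integral_map (hεmeas 0).aemeasurable hℓ₀meas.aestronglyMeasurable]
    have hchern3 : ∃ β > (0:ℝ), ∀ N : ℕ, 1 ≤ N →
        (ℙ {ω | (N:ℝ) * 1 ≤
          ∑ i ∈ Finset.range N, (ℓ₀ (ε i ω) - L)}).toReal ≤ Real.exp (-β * N) := by
      obtain ⟨δl, hδl, hml⟩ := hmgfℓ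
      have hgm : Measurable fun e => ℓ₀ e - L := hℓ₀meas.sub measurable_const
      refine chernoff_iid (fun i ω => ℓ₀ (ε i ω) - L)
        (fun i => hgm.comp (hεmeas i))
        (hindep.comp (fun _ e => ℓ₀ e - L) (fun _ => hgm))
        (fun i => (hident i).comp hgm)
        (hℓ₀intΩ.sub (integrable_const _)) ?_ one_pos hδl ?_
      · rw [integral_sub hℓ₀intΩ (integrable_const _), integral_const, hLint]
        simp
      · intro t ht
        have hbase : Integrable (fun ω => Real.exp (t * ℓ₀ (ε 0 ω))) ℙ := by
          refine Integrable.mono' ((hml t ht).add (integrable_const 1))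
            (((hℓ₀meas.comp (hεmeas 0)).const_mul t).exp.aestronglyMeasurable) ?_
          filter_upwards [hℓ₀pull] with ω hω
          simp only [Pi.add_apply]
          rw [Real.norm_eq_abs, abs_of_pos (Real.exp_pos _)]
          rcases le_or_gt (ℓ₁ (ε 0 ω)) 0 with hcase | hcase
          · have : ℓ₀ (ε 0 ω) = 0 := max_eq_right hcase
            rw [this, mul_zero, Real.exp_zero]
            have := (Real.exp_pos (t * ℓ (ε 0 ω))).le
            linarith
          · have : ℓ₀ (ε 0 ω) = ℓ₁ (ε 0 ω) := max_eq_left hcase.le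
            rw [this, ← hω]
            linarith [Real.exp_pos (t * ℓ (ε 0 ω))]
        have heq : (fun ω => Real.exp (t * (ℓ₀ (ε 0 ω) - L)))
            = fun ω => Real.exp (-(t * L)) * Real.exp (t * ℓ₀ (ε 0 ω)) := by
          funext ω; rw [← Real.exp_add]; ring_nf
        rw [heq]
        exact hbase.const_mul _
    choose βf hβfpos hβf using hchern1
    obtain ⟨β₂, hβ₂pos, hβ₂⟩ := hchern2
    obtain ⟨β₃, hβ₃pos, hβ₃⟩ := hchern3
    have hTim : (T.image βf).Nonempty := hTne.image βf
    set βm : ℝ := (T.image βf).min' hTim with hβmdef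
    have hβmpos : 0 < βm := by
      obtain ⟨z, hz, hzeq⟩ := Finset.mem_image.mp ((T.image βf).min'_mem hTim)
      rw [hβmdef, ← hzeq]; exact hβfpos z
    set β : ℝ := min (min β₂ β₃) βm with hβdef
    have hβpos : 0 < β := lt_min (lt_min hβ₂pos hβ₃pos) hβmpos
    refine ⟨(T.card : ℝ) + 2, β, hβpos, fun N hN => ?_⟩
    have hNr : (1:ℝ) ≤ (N:ℝ) := by exact_mod_cast hN
    have hNpos : (0:ℝ) < (N:ℝ) := by linarith
    set B1 : X → Set Ω := fun z =>
      {ω | (N:ℝ) * (η/4) ≤ ∑ i ∈ Finset.range N, (A z (ε i ω) - α z)} with hB1def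
    set B2 : Set Ω :=
      {ω | (N:ℝ) * (η/2) ≤ ∑ i ∈ Finset.range N, (α xs - A xs (ε i ω))} with hB2def
    set B3 : Set Ω :=
      {ω | (N:ℝ) * 1 ≤ ∑ i ∈ Finset.range N, (ℓ₀ (ε i ω) - L)} with hB3def
    set U : Set Ω := ((⋃ z ∈ T, B1 z) ∪ B2) ∪ B3 with hUdef
    -- a.e. pointwise Lipschitz bound for all samples
    have hLipω : ∀ᵐ ω ∂ℙ, ∀ i, ∀ x y : X,
        |A x (ε i ω) - A y (ε i ω)| ≤ ℓ₀ (ε i ω) * dist x y := by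
      rw [ae_all_iff]
      intro i
      have hmapi : Measure.map (ε i) ℙ = μ := (hident i).map_eq
      have h := hℓ₀lip
      rw [← hmapi] at h
      exact ae_of_ae_map (hεmeas i).aemeasurable h
    -- a.e. event inclusion
    have hsub : ∀ᵐ ω ∂ℙ,
        ω ∈ {ω | Metric.infDist (xhat N ω) Xs > δ} → ω ∈ U := by
      filter_upwards [hLipω] with ω hω hmem
      by_cases h3 : ω ∈ B3
      · exact Or.inr h3
      by_cases h2 : ω ∈ B2
      · exact Or.inl (Or.inr h2)
      refine Or.inl (Or.inl ?_)
      -- notation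
      set xh : X := xhat N ω with hxhdef
      have hSA : ∀ z : X, ∑ i ∈ Finset.range N, A z (ε i ω)
          ≤ ∑ i ∈ Finset.range N, A xh (ε i ω) := by
        intro z
        have h := hxhat N ω z
        rw [hαhat, hαhat] at h
        exact (mul_le_mul_iff_right₀ (inv_pos.mpr hNpos)).mp h
      have hxhS : xh ∈ S := le_of_lt hmem
      have hαxh : α xh ≤ α x₁ := hx₁max xh hxhS
      obtain ⟨z, hzT, hzdist⟩ := hTcover xh
      refine Set.mem_biUnion hzT ?_
      rw [hB1def]
      simp only [Set.mem_setOf_eq]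
      -- abbreviations
      set SAz : ℝ := ∑ i ∈ Finset.range N, A z (ε i ω) with hSAz
      set SAx : ℝ := ∑ i ∈ Finset.range N, A xh (ε i ω) with hSAx
      set SAs : ℝ := ∑ i ∈ Finset.range N, A xs (ε i ω) with hSAs
      set Sl : ℝ := ∑ i ∈ Finset.range N, ℓ₀ (ε i ω) with hSl
      set d : ℝ := dist xh z with hd
      have hd0 : (0:ℝ) ≤ d := dist_nonneg
      have hSl0 : (0:ℝ) ≤ Sl :=
        Finset.sum_nonneg fun i _ => hℓ₀nonneg _
      -- rewrite sums of differences
      have hsumA : ∑ i ∈ Finset.range N, (A z (ε i ω) - α z) = SAz - (N:ℝ) * α z := by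
        rw [Finset.sum_sub_distrib, Finset.sum_const, Finset.card_range, nsmul_eq_mul]
      rw [hsumA]
      -- ¬B2 :
      have hnB2 : (N:ℝ) * α xs - SAs < (N:ℝ) * (η/2) := by
        rw [hB2def] at h2
        simp only [Set.mem_setOf_eq, not_le] at h2
        have : ∑ i ∈ Finset.range N, (α xs - A xs (ε i ω))
            = (N:ℝ) * α xs - SAs := by
          rw [Finset.sum_sub_distrib, Finset.sum_const, Finset.card_range, nsmul_eq_mul]
        linarith [this ▸ h2]
      -- ¬B3 :
      have hnB3 : Sl - (N:ℝ) * L < (N:ℝ) := by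
        rw [hB3def] at h3
        simp only [Set.mem_setOf_eq, not_le] at h3
        have : ∑ i ∈ Finset.range N, (ℓ₀ (ε i ω) - L)
            = Sl - (N:ℝ) * L := by
          rw [Finset.sum_sub_distrib, Finset.sum_const, Finset.card_range, nsmul_eq_mul]
        have h3' := this ▸ h3
        linarith
      -- Lipschitz bound for sums
      have hsumlip : SAx - SAz ≤ Sl * d := by
        have h1 : SAx - SAz = ∑ i ∈ Finset.range N, (A xh (ε i ω) - A z (ε i ω)) := by
          rw [Finset.sum_sub_distrib]
        rw [h1]
        calc ∑ i ∈ Finset.range N, (A xh (ε i ω) - A z (ε i ω))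
            ≤ ∑ i ∈ Finset.range N, ℓ₀ (ε i ω) * d :=
              Finset.sum_le_sum fun i _ => (le_abs_self _).trans (hω i xh z)
          _ = Sl * d := by rw [← Finset.sum_mul]
      -- α bound at z
      have hαz : α z ≤ α xh + L * d := by
        have := hαlip z xh
        rw [dist_comm z xh, ← hd] at this
        have habs := abs_le.mp this
        linarith [habs.1, habs.2]
      -- chain of bounds
      have key1 : SAz ≥ SAs - Sl * d := by linarith [hSA z, hSA xs, hsumlip]
      have key2 : SAs > (N:ℝ) * α xs - (N:ℝ) * (η/2) := by linarith
      have key3 : (N:ℝ) * α z ≤ (N:ℝ) * (α xs - η) + (N:ℝ) * (L * d) := by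
        have hz1 : α z ≤ α xs - η + L * d := by
          rw [hηdef] at *
          linarith
        nlinarith [hNpos.le]
      have key4 : Sl * d + (N:ℝ) * (L * d) ≤ (N:ℝ) * (2*L+1) * d := by
        have hSlle : Sl ≤ (N:ℝ) * (L + 1) := by linarith
        nlinarith [hd0]
      have key5 : (N:ℝ) * (2*L+1) * d ≤ (N:ℝ) * (2*L+1) * r := by
        refine mul_le_mul_of_nonneg_left hzdist.le ?_
        exact mul_nonneg hNpos.le hLpos.le
      have key6 : (N:ℝ) * (2*L+1) * r = (N:ℝ) * (η/4) := by
        rw [hrdef]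
        field_simp
      linarith
    -- measure estimates
    have hPU : ℙ {ω | Metric.infDist (xhat N ω) Xs > δ} ≤ ℙ U :=
      measure_mono_ae hsub
    have hfinite : ∀ s : Set Ω, ℙ s ≠ ⊤ := fun s => measure_ne_top ℙ s
    have hB1bound : ∀ z ∈ T, (ℙ (B1 z)).toReal ≤ Real.exp (-β * N) := by
      intro z hz
      refine (hβf z N hN).trans ?_
      apply Real.exp_le_exp.mpr
      have hle : β ≤ βf z := by
        refine le_trans (min_le_right _ _) ?_
        exact Finset.min'_le _ _ (Finset.mem_image_of_mem βf hz)
      nlinarith [hNpos]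
    have hB2bound : (ℙ B2).toReal ≤ Real.exp (-β * N) := by
      refine (hβ₂ N hN).trans ?_
      apply Real.exp_le_exp.mpr
      have hle : β ≤ β₂ := le_trans (min_le_left _ _) (min_le_left _ _)
      nlinarith [hNpos]
    have hB3bound : (ℙ B3).toReal ≤ Real.exp (-β * N) := by
      refine (hβ₃ N hN).trans ?_
      apply Real.exp_le_exp.mpr
      have hle : β ≤ β₃ := le_trans (min_le_left _ _) (min_le_right _ _)
      nlinarith [hNpos]
    have hUB : ℙ U ≤ (∑ z ∈ T, ℙ (B1 z)) + ℙ B2 + ℙ B3 := by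
      calc ℙ U ≤ ℙ ((⋃ z ∈ T, B1 z) ∪ B2) + ℙ B3 := measure_union_le _ _
        _ ≤ (ℙ (⋃ z ∈ T, B1 z) + ℙ B2) + ℙ B3 := by
            gcongr
            exact measure_union_le _ _
        _ ≤ ((∑ z ∈ T, ℙ (B1 z)) + ℙ B2) + ℙ B3 := by
            gcongr
            exact measure_biUnion_finset_le T B1
    have hsum_ne : (∑ z ∈ T, ℙ (B1 z)) ≠ ⊤ :=
      (ENNReal.sum_lt_top.mpr fun z _ => measure_lt_top ℙ _).ne
    have hRHS_ne : (∑ z ∈ T, ℙ (B1 z)) + ℙ B2 + ℙ B3 ≠ ⊤ := by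
      refine ENNReal.add_ne_top.mpr ⟨ENNReal.add_ne_top.mpr ⟨hsum_ne, hfinite _⟩, hfinite _⟩
    have htotal : (ℙ {ω | Metric.infDist (xhat N ω) Xs > δ}).toReal
        ≤ (∑ z ∈ T, (ℙ (B1 z)).toReal) + (ℙ B2).toReal + (ℙ B3).toReal := by
      have h1 := ENNReal.toReal_mono hRHS_ne (le_trans hPU hUB)
      rwa [ENNReal.toReal_add (ENNReal.add_ne_top.mpr ⟨hsum_ne, hfinite _⟩) (hfinite _),
        ENNReal.toReal_add hsum_ne (hfinite _),
        ENNReal.toReal_sum (fun z _ => hfinite _)] at h1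
    refine htotal.trans ?_
    have hsumT : (∑ z ∈ T, (ℙ (B1 z)).toReal) ≤ (T.card : ℝ) * Real.exp (-β * N) := by
      calc ∑ z ∈ T, (ℙ (B1 z)).toReal ≤ ∑ _z ∈ T, Real.exp (-β * N) :=
            Finset.sum_le_sum hB1bound
        _ = (T.card : ℝ) * Real.exp (-β * N) := by
            rw [Finset.sum_const, nsmul_eq_mul]
    have hexp : (0:ℝ) < Real.exp (-β * N) := Real.exp_pos _
    calc (∑ z ∈ T, (ℙ (B1 z)).toReal) + (ℙ B2).toReal + (ℙ B3).toReal
        ≤ (T.card : ℝ) * Real.exp (-β * N) + Real.exp (-β * N) + Real.exp (-β * N) := by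
          linarith [hsumT, hB2bound, hB3bound]
      _ = ((T.card : ℝ) + 2) * Real.exp (-β * N) := by ring
end

section
/- If the base samples ε¹, ε², … are i.i.d. standard Gaussian N(0, I_q) vectors, then (1) α̂_N* → α* almost surely as N → ∞, and (2) dist(x̂_N, 𝒳*) → 0 almost surely as N → ∞. -/
open MeasureTheory ProbabilityTheory Filter Topology

/-- The standard Gaussian measure `N(0, I_q)` on `ℝ^q`, as the pushforward of the product of
`q` standard one-dimensional Gaussians under the identification `(Fin q → ℝ) ≃ ℝ^q`. -/
noncomputable def stdGaussian (q : ℕ) : Measure (EuclideanSpace ℝ (Fin q)) :=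
  (Measure.pi fun _ : Fin q => gaussianReal 0 1).map
    (MeasurableEquiv.toLp 2 (Fin q → ℝ))

lemma stdGaussian_isProb (q : ℕ) : IsProbabilityMeasure (stdGaussian q) :=
  Measure.isProbabilityMeasure_map (MeasurableEquiv.measurable _).aemeasurable

lemma integrable_abs_gaussianReal : Integrable (fun x : ℝ => |x|) (gaussianReal 0 1) := by
  rw [gaussianReal_of_var_ne_zero 0 one_ne_zero]
  rw [integrable_withDensity_iff (measurable_gaussianPDF 0 1)
    (Eventually.of_forall fun x => ENNReal.ofReal_lt_top)]
  have h1 : ∀ x : ℝ, (gaussianPDF 0 1 x).toReal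
      = (Real.sqrt (2 * Real.pi))⁻¹ * Real.exp (-(2⁻¹ * x ^ 2)) := by
    intro x
    rw [gaussianPDF, ENNReal.toReal_ofReal (gaussianPDFReal_nonneg _ _ _), gaussianPDFReal]
    norm_num
    left
    ring
  have h2 : Integrable (fun x : ℝ => |x| * Real.exp (-(2⁻¹ * x ^ 2))) := by
    have := (integrable_mul_exp_neg_mul_sq (b := 2⁻¹) (by norm_num)).abs
    refine this.congr ?_
    filter_upwards with x
    rw [abs_mul, abs_of_pos (Real.exp_pos _), neg_mul]
  simp only [h1]
  have := h2.const_mul (Real.sqrt (2 * Real.pi))⁻¹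
  refine this.congr ?_
  filter_upwards with x
  ring

lemma measurePreserving_eval_pi {ι : Type*} [Fintype ι] {α : ι → Type*}
    [∀ i, MeasurableSpace (α i)] (π : ∀ i, Measure (α i))
    [∀ i, IsProbabilityMeasure (π i)] (i : ι) :
    MeasurePreserving (Function.eval i) (Measure.pi π) (π i) := by
  classical
  refine ⟨measurable_pi_apply i, ?_⟩
  ext s hs
  rw [Measure.map_apply (measurable_pi_apply i) hs, Set.eval_preimage, Measure.pi_pi]
  rw [Finset.prod_eq_single i]
  · simp
  · intro j _ hj
    simp [Function.update_of_ne hj]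
  · simp

lemma integrable_norm_stdGaussian (q : ℕ) :
    Integrable (fun e : EuclideanSpace ℝ (Fin q) => ‖e‖) (stdGaussian q) := by
  rw [_root_.stdGaussian, integrable_map_equiv]
  have hb : ∀ y : Fin q → ℝ,
      ‖(MeasurableEquiv.toLp 2 (Fin q → ℝ)) y‖ ≤ ∑ i, |y i| := by
    intro y
    rw [EuclideanSpace.norm_eq]
    have h1 : ∀ i, ‖(MeasurableEquiv.toLp 2 (Fin q → ℝ)) y i‖ = |y i| := fun i => rfl
    simp only [h1]
    calc Real.sqrt (∑ i, |y i| ^ 2) ≤ Real.sqrt ((∑ i, |y i|) ^ 2) := by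
          apply Real.sqrt_le_sqrt
          exact Finset.sum_sq_le_sq_sum_of_nonneg fun i _ => abs_nonneg _
      _ = ∑ i, |y i| := Real.sqrt_sq (Finset.sum_nonneg fun i _ => abs_nonneg _)
  have hint : Integrable (fun y : Fin q → ℝ => ∑ i, |y i|)
      (Measure.pi fun _ => gaussianReal 0 1) := by
    apply integrable_finset_sum
    intro i _
    exact (measurePreserving_eval_pi (fun _ => gaussianReal 0 1) i).integrable_comp
      measurable_abs.aestronglyMeasurable |>.mpr integrable_abs_gaussianReal
  refine hint.mono' ?_ (Eventually.of_forall fun y => by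
    simpa [Real.norm_eq_abs, abs_of_nonneg (norm_nonneg _)] using hb y)
  exact (measurable_norm.comp (MeasurableEquiv.measurable _)).aestronglyMeasurable

lemma exists_lipschitzOnWith_of_contDiff
    {E F : Type*} [NormedAddCommGroup E] [NormedSpace ℝ E]
    [NormedAddCommGroup F] [NormedSpace ℝ F] {f : E → F}
    (hf : ContDiff ℝ 1 f) {s : Set E} (hs : Convex ℝ s) (hc : IsCompact s) :
    ∃ C : ℝ, 0 ≤ C ∧ ∀ x ∈ s, ∀ y ∈ s, ‖f x - f y‖ ≤ C * ‖x - y‖ := by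
  obtain ⟨C, hC⟩ := hc.exists_bound_of_continuousOn
    (hf.continuous_fderiv one_ne_zero).continuousOn
  set M : NNReal := ⟨max C 0, le_max_right _ _⟩ with hM
  have hlip : LipschitzOnWith M f s := by
    apply hs.lipschitzOnWith_of_nnnorm_hasFDerivWithin_le
      (f' := fun x => fderiv ℝ f x)
    · intro x hx
      exact ((hf.differentiable one_ne_zero) x).hasFDerivAt.hasFDerivWithinAt
    · intro x hx
      rw [← NNReal.coe_le_coe, coe_nnnorm]
      exact le_trans (hC x hx) (le_max_left _ _)
  refine ⟨M, M.2, fun x hx y hy => ?_⟩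
  have := hlip.norm_sub_le hx hy
  exact this

lemma slln_comp {q : ℕ} {Ω : Type*} [MeasureSpace Ω] [IsProbabilityMeasure (ℙ : Measure Ω)]
    (ε : ℕ → Ω → EuclideanSpace ℝ (Fin q))
    (hεmeas : ∀ i, Measurable (ε i))
    (hindep : iIndepFun ε ℙ)
    (hgauss : ∀ i, Measure.map (ε i) ℙ = stdGaussian q)
    (f : EuclideanSpace ℝ (Fin q) → ℝ) (hf : Measurable f)
    (hint : Integrable f (stdGaussian q)) :
    ∀ᵐ ω ∂ℙ, Tendsto (fun N : ℕ => (N : ℝ)⁻¹ * ∑ i ∈ Finset.range N, f (ε i ω))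
      atTop (𝓝 (∫ e, f e ∂(stdGaussian q))) := by
  have hX0 : Integrable (f ∘ ε 0) ℙ := by
    rw [← integrable_map_measure (by rw [hgauss 0]; exact hf.aestronglyMeasurable)
      (hεmeas 0).aemeasurable, hgauss 0]
    exact hint
  have hpair : Pairwise (Function.onFun (fun X Y => IndepFun X Y ℙ) fun i => f ∘ ε i) :=
    fun i j hij => (hindep.indepFun hij).comp hf hf
  have hident : ∀ i, IdentDistrib (f ∘ ε i) (f ∘ ε 0) ℙ ℙ := fun i =>
    IdentDistrib.comp ⟨(hεmeas i).aemeasurable, (hεmeas 0).aemeasurable,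
      by rw [hgauss i, hgauss 0]⟩ hf
  have := strong_law_ae (fun i => f ∘ ε i) hX0 hpair hident
  have hmean : ∫ ω, (f ∘ ε 0) ω ∂ℙ = ∫ e, f e ∂(stdGaussian q) := by
    rw [← hgauss 0, integral_map (hεmeas 0).aemeasurable
      (by rw [hgauss 0]; exact hf.aestronglyMeasurable)]
    rfl
  filter_upwards [this] with ω hω
  rw [hmean] at hω
  simpa [smul_eq_mul] using hω


/-- **Theorem 1 (a.s. SAA convergence for MC acquisition functions).**
Let `𝕏 ⊂ ℝ^d` be compact, `h (x, ε) := μ x + Λ x ε` with `μ, Λ` continuously differentiable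
(the reparameterized posterior of a GP with continuously differentiable mean and covariance),
and `A (x, ε) := a (g (h (x, ε)))` with `g, a` Lipschitz. If the base samples `ε¹, ε², …` are
i.i.d. standard Gaussian `N(0, I_q)`, then (1) the SAA optimal values `α̂_N*` converge a.s.
to the true optimal value `α*`, and (2) `dist(x̂_N, 𝒳*) → 0` a.s. -/
theorem saa_convergence_mc_acqf
    {d q : ℕ} (K : Set (EuclideanSpace ℝ (Fin d))) (hK : IsCompact K) (hKne : K.Nonempty)
    (μ : EuclideanSpace ℝ (Fin d) → EuclideanSpace ℝ (Fin q))
    (Λ : EuclideanSpace ℝ (Fin d) →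
      (EuclideanSpace ℝ (Fin q) →L[ℝ] EuclideanSpace ℝ (Fin q)))
    (hμ : ContDiff ℝ 1 μ) (hΛ : ContDiff ℝ 1 Λ)
    (g : EuclideanSpace ℝ (Fin q) → EuclideanSpace ℝ (Fin q))
    (a : EuclideanSpace ℝ (Fin q) → ℝ)
    (Lg La : NNReal) (hg : LipschitzWith Lg g) (ha : LipschitzWith La a)
    (A : EuclideanSpace ℝ (Fin d) → EuclideanSpace ℝ (Fin q) → ℝ)
    (hA : ∀ x ε, A x ε = a (g (μ x + Λ x ε)))
    -- i.i.d. standard Gaussian base samples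
    {Ω : Type*} [MeasureSpace Ω] [IsProbabilityMeasure (ℙ : Measure Ω)]
    (ε : ℕ → Ω → EuclideanSpace ℝ (Fin q))
    (hεmeas : ∀ i, Measurable (ε i))
    (hindep : iIndepFun ε ℙ)
    (hgauss : ∀ i, Measure.map (ε i) ℙ = stdGaussian q)
    -- the true and sample-average acquisition functions
    (α : EuclideanSpace ℝ (Fin d) → ℝ)
    (hα : ∀ x, α x = ∫ e, A x e ∂(stdGaussian q))
    (αhat : ℕ → EuclideanSpace ℝ (Fin d) → Ω → ℝ)
    (hαhat : ∀ N x ω, αhat N x ω = (N : ℝ)⁻¹ * ∑ i ∈ Finset.range N, A x (ε i ω))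
    -- SAA maximizers over `K`
    (xhat : ℕ → Ω → EuclideanSpace ℝ (Fin d))
    (hxhatK : ∀ N ω, xhat N ω ∈ K)
    (hxhat : ∀ N ω, ∀ y ∈ K, αhat N y ω ≤ αhat N (xhat N ω) ω) :
    (∀ᵐ ω ∂ℙ, Tendsto (fun N => ⨆ x : K, αhat N x ω) atTop (𝓝 (⨆ x : K, α x))) ∧
    (∀ᵐ ω ∂ℙ, Tendsto
      (fun N => Metric.infDist (xhat N ω) {x ∈ K | ∀ y ∈ K, α y ≤ α x})
      atTop (𝓝 0)) := by
  classical
  haveI hν : IsProbabilityMeasure (stdGaussian q) := stdGaussian_isProb q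
  haveI : Nonempty K := hKne.to_subtype
  -- continuity of A x in ε
  have hAcont : ∀ x, Continuous (A x) := fun x =>
    Continuous.congr (ha.continuous.comp (hg.continuous.comp
      (continuous_const.add (Λ x).continuous))) (fun e => (hA x e).symm)
  -- integrability of A x
  have hAint : ∀ x, Integrable (A x) (stdGaussian q) := by
    intro x
    refine Integrable.mono' ((integrable_const (|A x 0|)).add
      ((integrable_norm_stdGaussian q).const_mul ((La : ℝ) * Lg * ‖Λ x‖)))
      (hAcont x).aestronglyMeasurable (Eventually.of_forall fun e => ?_)
    rw [Real.norm_eq_abs]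
    have h1 : |A x e - A x 0| ≤ (La : ℝ) * Lg * ‖Λ x‖ * ‖e‖ := by
      rw [hA x e, hA x 0]
      have h2 := (ha.comp hg).dist_le_mul (μ x + Λ x e) (μ x + Λ x 0)
      rw [Real.dist_eq] at h2
      refine h2.trans ?_
      rw [dist_eq_norm]
      have h3 : μ x + Λ x e - (μ x + Λ x 0) = Λ x e - Λ x 0 := by abel
      rw [h3, ← map_sub, sub_zero]
      calc ((La * Lg : NNReal) : ℝ) * ‖Λ x e‖
          ≤ (La : ℝ) * Lg * (‖Λ x‖ * ‖e‖) := by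
            push_cast
            exact mul_le_mul_of_nonneg_left ((Λ x).le_opNorm e) (by positivity)
        _ = (La : ℝ) * Lg * ‖Λ x‖ * ‖e‖ := by ring
    calc |A x e| ≤ |A x 0| + |A x e - A x 0| := by
          have := abs_sub_abs_le_abs_sub (A x e) (A x 0)
          linarith [abs_sub_comm (A x e) (A x 0)]
      _ ≤ |A x 0| + (La : ℝ) * Lg * ‖Λ x‖ * ‖e‖ := by linarith
  set m := ∫ e, ‖e‖ ∂(stdGaussian q) with hm
  have hm0 : 0 ≤ m := integral_nonneg fun e => norm_nonneg e
  -- pointwise SLLN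
  have hSLLN : ∀ x, ∀ᵐ ω ∂ℙ, Tendsto (fun N => αhat N x ω) atTop (𝓝 (α x)) := by
    intro x
    filter_upwards [slln_comp ε hεmeas hindep hgauss (A x) (hAcont x).measurable (hAint x)]
      with ω hω
    rw [hα x]
    exact Tendsto.congr (fun N => (hαhat N x ω).symm) hω
  have hSLLNnorm : ∀ᵐ ω ∂ℙ, Tendsto
      (fun N : ℕ => (N : ℝ)⁻¹ * ∑ i ∈ Finset.range N, ‖ε i ω‖) atTop (𝓝 m) :=
    slln_comp ε hεmeas hindep hgauss _ measurable_norm (integrable_norm_stdGaussian q)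
  -- Lipschitz constants on a ball containing K
  obtain ⟨R, hR⟩ := hK.isBounded.subset_closedBall 0
  obtain ⟨Cμ, hCμ0, hCμ⟩ := exists_lipschitzOnWith_of_contDiff hμ
    (convex_closedBall (0 : EuclideanSpace ℝ (Fin d)) R) (isCompact_closedBall _ _)
  obtain ⟨CΛ, hCΛ0, hCΛ⟩ := exists_lipschitzOnWith_of_contDiff hΛ
    (convex_closedBall (0 : EuclideanSpace ℝ (Fin d)) R) (isCompact_closedBall _ _)
  set C := (La : ℝ) * Lg * (Cμ + CΛ) with hCdef
  have hC0 : 0 ≤ C := by positivity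
  have hAlip : ∀ x ∈ K, ∀ y ∈ K, ∀ e, |A x e - A y e| ≤ C * (1 + ‖e‖) * ‖x - y‖ := by
    intro x hx y hy e
    rw [hA x e, hA y e]
    have h2 := (ha.comp hg).dist_le_mul (μ x + Λ x e) (μ y + Λ y e)
    rw [Real.dist_eq] at h2
    refine h2.trans ?_
    rw [dist_eq_norm]
    have h3 : μ x + Λ x e - (μ y + Λ y e) = (μ x - μ y) + (Λ x e - Λ y e) := by abel
    have h4 : ‖μ x + Λ x e - (μ y + Λ y e)‖ ≤ Cμ * ‖x - y‖ + CΛ * ‖x - y‖ * ‖e‖ := by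
      rw [h3]
      refine (norm_add_le _ _).trans ?_
      have h5 : ‖μ x - μ y‖ ≤ Cμ * ‖x - y‖ := hCμ x (hR hx) y (hR hy)
      have h6 : ‖Λ x e - Λ y e‖ ≤ CΛ * ‖x - y‖ * ‖e‖ := by
        have : Λ x e - Λ y e = (Λ x - Λ y) e := by simp
        rw [this]
        calc ‖(Λ x - Λ y) e‖ ≤ ‖Λ x - Λ y‖ * ‖e‖ := (Λ x - Λ y).le_opNorm e
          _ ≤ CΛ * ‖x - y‖ * ‖e‖ :=
              mul_le_mul_of_nonneg_right (hCΛ x (hR hx) y (hR hy)) (norm_nonneg e)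
      linarith
    calc ((La * Lg : NNReal) : ℝ) * ‖μ x + Λ x e - (μ y + Λ y e)‖
        ≤ (La : ℝ) * Lg * (Cμ * ‖x - y‖ + CΛ * ‖x - y‖ * ‖e‖) := by
          push_cast
          exact mul_le_mul_of_nonneg_left h4 (by positivity)
      _ ≤ C * (1 + ‖e‖) * ‖x - y‖ := by
          rw [hCdef]
          have h7 : 0 ≤ (La : ℝ) * Lg := by positivity
          nlinarith [mul_nonneg (mul_nonneg h7 hCΛ0) (norm_nonneg (x-y)), mul_nonneg (mul_nonneg (mul_nonneg h7 hCμ0) (norm_nonneg (x-y))) (norm_nonneg e)]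
  -- Lipschitz bound for α on K
  have hαlip : ∀ x ∈ K, ∀ y ∈ K, |α x - α y| ≤ C * (1 + m) * ‖x - y‖ := by
    intro x hx y hy
    rw [hα x, hα y, ← integral_sub (hAint x) (hAint y)]
    have h1 : Integrable (fun e : EuclideanSpace ℝ (Fin q) =>
        C * (1 + ‖e‖) * ‖x - y‖) (stdGaussian q) := by
      have h0 : Integrable (fun e : EuclideanSpace ℝ (Fin q) => 1 + ‖e‖) (stdGaussian q) :=
        ((integrable_const (1 : ℝ)).add (integrable_norm_stdGaussian q)).congr
          (Eventually.of_forall fun e => rfl)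
      exact ((h0.const_mul C).mul_const ‖x - y‖).congr (Eventually.of_forall fun e => by ring)
    calc |∫ e, (A x e - A y e) ∂(stdGaussian q)|
        ≤ ∫ e, |A x e - A y e| ∂(stdGaussian q) := by
          simpa [Real.norm_eq_abs] using
            norm_integral_le_integral_norm (μ := stdGaussian q) (fun e => A x e - A y e)
      _ ≤ ∫ e, C * (1 + ‖e‖) * ‖x - y‖ ∂(stdGaussian q) := by
          refine integral_mono ((hAint x).sub (hAint y)).abs h1 fun e => hAlip x hx y hy e
      _ = C * (1 + m) * ‖x - y‖ := by
          rw [show (fun e : EuclideanSpace ℝ (Fin q) => C * (1 + ‖e‖) * ‖x - y‖)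
            = fun e : EuclideanSpace ℝ (Fin q) => (C * ‖x - y‖) * (1 + ‖e‖) from
            funext fun e => by ring]
          rw [integral_const_mul, integral_add (integrable_const 1)
            (integrable_norm_stdGaussian q), integral_const]
          simp [measure_univ, ← hm]
          ring
  have hαcont : ContinuousOn α K := by
    have hlip : LipschitzOnWith (C * (1 + m)).toNNReal α K := by
      rw [lipschitzOnWith_iff_dist_le_mul]
      intro x hx y hy
      rw [Real.dist_eq, dist_eq_norm,
        Real.coe_toNNReal _ (by positivity : (0:ℝ) ≤ C * (1 + m))]
      exact hαlip x hx y hy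
    exact hlip.continuousOn
  obtain ⟨xstar, hxstarK, hxstarmax⟩ := hK.exists_isMaxOn hKne hαcont
  have hsupα : (⨆ x : K, α x) = α xstar := by
    refine le_antisymm (ciSup_le fun y => hxstarmax y.2) ?_
    refine le_ciSup (f := fun x : K => α x) ⟨α xstar, ?_⟩ ⟨xstar, hxstarK⟩
    rintro _ ⟨y, rfl⟩
    exact hxstarmax y.2
  have hsup_hat : ∀ N ω, (⨆ x : K, αhat N (x : EuclideanSpace ℝ (Fin d)) ω)
      = αhat N (xhat N ω) ω := by
    intro N ω
    refine le_antisymm (ciSup_le fun y => hxhat N ω y y.2) ?_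
    refine le_ciSup (f := fun x : K => αhat N (x : EuclideanSpace ℝ (Fin d)) ω)
      ⟨αhat N (xhat N ω) ω, ?_⟩ ⟨xhat N ω, hxhatK N ω⟩
    rintro _ ⟨y, rfl⟩
    exact hxhat N ω y y.2
  -- countable dense subset of K
  obtain ⟨D, hDK, hDcount, hDdense⟩ := EMetric.subset_countable_closure_of_compact hK
  have hgood : ∀ᵐ ω ∂ℙ, (∀ z ∈ D, Tendsto (fun N => αhat N z ω) atTop (𝓝 (α z))) ∧
      Tendsto (fun N : ℕ => (N : ℝ)⁻¹ * ∑ i ∈ Finset.range N, ‖ε i ω‖) atTop (𝓝 m) :=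
    ((ae_ball_iff hDcount).2 fun z _ => hSLLN z).and hSLLNnorm
  -- uniform convergence on the good event
  have hunif : ∀ ω, (∀ z ∈ D, Tendsto (fun N => αhat N z ω) atTop (𝓝 (α z))) →
      Tendsto (fun N : ℕ => (N : ℝ)⁻¹ * ∑ i ∈ Finset.range N, ‖ε i ω‖) atTop (𝓝 m) →
      ∀ δ > 0, ∀ᶠ N in atTop, ∀ x ∈ K, |αhat N x ω - α x| ≤ δ := by
    intro ω hD hn δ hδ
    set C' := C * (2 + m) + C * (1 + m) + 1 with hC'
    have hC'pos : 0 < C' := by nlinarith [mul_nonneg hC0 hm0]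
    set ρ := δ / (3 * C') with hρdef
    have hρ : 0 < ρ := by positivity
    have hρC' : C' * ρ = δ / 3 := by
      rw [hρdef]
      field_simp
    have hcover : K ⊆ ⋃ z ∈ D, Metric.ball z ρ := by
      intro x hx
      obtain ⟨z, hzD, hz⟩ := Metric.mem_closure_iff.1 (hDdense hx) ρ hρ
      exact Set.mem_biUnion hzD (Metric.mem_ball.2 hz)
    obtain ⟨F, hFD, hFfin, hFcover⟩ :=
      hK.elim_finite_subcover_image (fun z _ => Metric.isOpen_ball) hcover
    have hev1 : ∀ᶠ N in atTop, ∀ z ∈ F, |αhat N z ω - α z| < δ / 3 := by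
      rw [eventually_all_finite hFfin]
      intro z hz
      filter_upwards [hD z (hFD hz) (Metric.ball_mem_nhds (α z)
        (by positivity : (0:ℝ) < δ / 3))] with N hN
      rwa [Set.mem_preimage, Metric.mem_ball, Real.dist_eq] at hN
    have hev2 : ∀ᶠ N : ℕ in atTop, (N : ℝ)⁻¹ * ∑ i ∈ Finset.range N, ‖ε i ω‖ ≤ m + 1 := by
      filter_upwards [hn (Metric.ball_mem_nhds m one_pos)] with N hN
      rw [Set.mem_preimage, Metric.mem_ball, Real.dist_eq, abs_lt] at hN
      linarith [hN.2]
    filter_upwards [hev1, hev2, eventually_ge_atTop 1] with N h1 h2 h3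
    intro x hx
    obtain ⟨z, hzF, hzball⟩ := Set.mem_iUnion₂.1 (hFcover hx)
    have hzK : z ∈ K := hDK (hFD hzF)
    have hxz : ‖x - z‖ < ρ := by rw [← dist_eq_norm]; exact Metric.mem_ball.1 hzball
    have hNpos : (0:ℝ) < N := by exact_mod_cast Nat.lt_of_lt_of_le Nat.zero_lt_one h3
    have hN0 : (N:ℝ) ≠ 0 := ne_of_gt hNpos
    set s := ∑ i ∈ Finset.range N, ‖ε i ω‖ with hsdef
    have hs0 : 0 ≤ s := Finset.sum_nonneg fun i _ => norm_nonneg _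
    have hu0 : 0 ≤ (N:ℝ)⁻¹ * s := mul_nonneg (by positivity) hs0
    have key1 : |αhat N x ω - αhat N z ω| ≤ C * (2 + m) * ρ := by
      rw [hαhat N x ω, hαhat N z ω, ← mul_sub, ← Finset.sum_sub_distrib, abs_mul,
        abs_inv, Nat.abs_cast]
      have hsum : |∑ i ∈ Finset.range N, (A x (ε i ω) - A z (ε i ω))|
          ≤ C * ‖x - z‖ * ((N : ℝ) + s) := by
        refine (Finset.abs_sum_le_sum_abs _ _).trans ?_
        have hterm : ∀ i ∈ Finset.range N, |A x (ε i ω) - A z (ε i ω)|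
            ≤ C * ‖x - z‖ * (1 + ‖ε i ω‖) := by
          intro i _
          calc |A x (ε i ω) - A z (ε i ω)| ≤ C * (1 + ‖ε i ω‖) * ‖x - z‖ :=
                hAlip x hx z hzK (ε i ω)
            _ = C * ‖x - z‖ * (1 + ‖ε i ω‖) := by ring
        refine (Finset.sum_le_sum hterm).trans_eq ?_
        rw [← Finset.mul_sum, Finset.sum_add_distrib, Finset.sum_const, Finset.card_range,
          ← hsdef]
        simp
      calc (N:ℝ)⁻¹ * |∑ i ∈ Finset.range N, (A x (ε i ω) - A z (ε i ω))|
          ≤ (N:ℝ)⁻¹ * (C * ‖x - z‖ * ((N:ℝ) + s)) :=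
            mul_le_mul_of_nonneg_left hsum (by positivity)
        _ = C * ‖x - z‖ * (1 + (N:ℝ)⁻¹ * s) := by field_simp
        _ ≤ C * ρ * (1 + (N:ℝ)⁻¹ * s) :=
            mul_le_mul_of_nonneg_right
              (mul_le_mul_of_nonneg_left hxz.le hC0) (by linarith)
        _ ≤ C * ρ * (2 + m) :=
            mul_le_mul_of_nonneg_left (by linarith) (mul_nonneg hC0 hρ.le)
        _ = C * (2 + m) * ρ := by ring
    have key2 : |α x - α z| ≤ C * (1 + m) * ρ :=
      (hαlip x hx z hzK).trans
        (mul_le_mul_of_nonneg_left hxz.le (mul_nonneg hC0 (by linarith)))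
    have htri : |αhat N x ω - α x| ≤ |αhat N x ω - αhat N z ω| + |αhat N z ω - α z|
        + |α z - α x| := by
      calc |αhat N x ω - α x| ≤ |αhat N x ω - αhat N z ω| + |αhat N z ω - α x| :=
            abs_sub_le _ _ _
        _ ≤ |αhat N x ω - αhat N z ω| + (|αhat N z ω - α z| + |α z - α x|) := by
            linarith [abs_sub_le (αhat N z ω) (α z) (α x)]
        _ = _ := by ring
    have hexp : C' * ρ = C * (2 + m) * ρ + C * (1 + m) * ρ + ρ := by rw [hC']; ring
    have h1z := h1 z hzF
    rw [abs_sub_comm (α z) (α x)] at htri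
    linarith
  constructor
  · -- convergence of optimal values
    filter_upwards [hgood] with ω hω
    have H := hunif ω hω.1 hω.2
    rw [hsupα]
    have heq : ∀ N, (⨆ x : K, αhat N (x : EuclideanSpace ℝ (Fin d)) ω)
        = αhat N (xhat N ω) ω := fun N => hsup_hat N ω
    rw [Metric.tendsto_atTop]
    intro δ hδ
    have Hev := H (δ / 2) (by positivity)
    rw [eventually_atTop] at Hev
    obtain ⟨N₀, hN₀⟩ := Hev
    refine ⟨N₀, fun n hn => ?_⟩
    rw [heq n, Real.dist_eq]
    have h1 := hN₀ n hn (xhat n ω) (hxhatK n ω)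
    have h2 := hN₀ n hn xstar hxstarK
    have h3 := hxhat n ω xstar hxstarK
    have h4 : α (xhat n ω) ≤ α xstar := hxstarmax (hxhatK n ω)
    rw [abs_le] at h1 h2
    rw [abs_lt]
    constructor <;> linarith
  · -- convergence of maximizers
    filter_upwards [hgood] with ω hω
    have H := hunif ω hω.1 hω.2
    rw [Metric.tendsto_atTop]
    intro η hη
    set S := {x ∈ K | ∀ y ∈ K, α y ≤ α x} with hS
    by_cases hT : ∃ t ∈ K, η ≤ Metric.infDist t S
    · set T := {x ∈ K | η ≤ Metric.infDist x S} with hTdef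
      have hTcomp : IsCompact T := hK.inter_right
        (isClosed_le continuous_const (Metric.continuous_infDist_pt S))
      obtain ⟨t₀, ht₀⟩ := hT
      obtain ⟨tstar, htT, htmax⟩ := hTcomp.exists_isMaxOn ⟨t₀, ht₀.1, ht₀.2⟩
        (hαcont.mono fun u hu => hu.1)
      have htK : tstar ∈ K := htT.1
      have hMlt : α tstar < α xstar := by
        have hle : α tstar ≤ α xstar := hxstarmax htK
        rcases lt_or_eq_of_le hle with h | h
        · exact h
        · exfalso
          have hts : tstar ∈ S := ⟨htK, fun y hy => (hxstarmax hy).trans h.ge⟩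
          have : Metric.infDist tstar S = 0 := Metric.infDist_zero_of_mem hts
          rw [hTdef] at htT
          have := htT.2
          linarith [Metric.infDist_zero_of_mem hts]
      set δ := (α xstar - α tstar) / 3 with hδdef
      have hδ : 0 < δ := by rw [hδdef]; linarith
      have Hev := H δ hδ
      rw [eventually_atTop] at Hev
      obtain ⟨N₀, hN₀⟩ := Hev
      refine ⟨N₀, fun n hn => ?_⟩
      have hxK := hxhatK n ω
      have h1 := hN₀ n hn (xhat n ω) hxK
      have h2 := hN₀ n hn xstar hxstarK
      have h3 := hxhat n ω xstar hxstarK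
      rw [abs_le] at h1 h2
      have h4 : α tstar < α (xhat n ω) := by rw [hδdef] at h1 h2; linarith
      have h5 : xhat n ω ∉ T := by
        intro hmem
        have h5' : α (xhat n ω) ≤ α tstar := htmax hmem
        linarith
      have h6 : Metric.infDist (xhat n ω) S < η := by
        by_contra hle
        exact h5 ⟨hxK, le_of_not_gt hle⟩
      rw [Real.dist_eq, sub_zero, abs_of_nonneg Metric.infDist_nonneg]
      exact h6
    · push_neg at hT
      exact ⟨0, fun n _ => by
        rw [Real.dist_eq, sub_zero, abs_of_nonneg Metric.infDist_nonneg]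
        exact hT _ (hxhatK n ω)⟩
end

section
/- If the base samples ε¹, ε², … are i.i.d. standard Gaussian N(0, I_q) vectors, then for every δ > 0 there exist K < ∞ and β > 0 such that ℙ(dist(x̂_N, 𝒳*) > δ) ≤ K·e^{−βN} for all N ≥ 1. -/
open MeasureTheory ProbabilityTheory Filter Topology

-- elementary: exp u ≤ 1 + u + u^2 * exp |u|
lemma aux_exp_quad (u : ℝ) : Real.exp u ≤ 1 + u + u ^ 2 * Real.exp |u| := by
  have h1 : (1 : ℝ) ≤ Real.exp |u| := Real.one_le_exp (abs_nonneg u)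
  rcases le_or_gt u 0 with h | h
  · have h2 : 0 < 1 - u := by linarith
    have h3 : Real.exp u ≤ (1 - u)⁻¹ := by
      have he : Real.exp (-u) * Real.exp u = 1 := by rw [← Real.exp_add]; simp
      nlinarith [Real.add_one_le_exp (-u), Real.exp_pos u, inv_pos.mpr h2,
        mul_inv_cancel₀ (ne_of_gt h2)]
    have h4 : (1 - u)⁻¹ ≤ 1 + u + u ^ 2 := by
      rw [inv_le_iff_one_le_mul₀ h2]
      nlinarith
    nlinarith [sq_nonneg u]
  · have k : (1 - u) * Real.exp u ≤ 1 := by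
      have h1 : Real.exp (-u) * Real.exp u = 1 := by rw [← Real.exp_add]; simp
      nlinarith [Real.add_one_le_exp (-u), Real.exp_pos u]
    have k2 : Real.exp u - 1 ≤ u * Real.exp u := by nlinarith
    rw [abs_of_pos h]
    nlinarith [Real.exp_pos u]

-- elementary: v^2 ≤ 4 exp v for v ≥ 0
lemma aux_sq_le_exp {v : ℝ} (hv : 0 ≤ v) : v ^ 2 ≤ 4 * Real.exp v := by
  have h1 : Real.exp v = Real.exp (v / 2) * Real.exp (v / 2) := by
    rw [← Real.exp_add]; ring_nf
  nlinarith [Real.add_one_le_exp (v / 2), Real.exp_pos (v / 2)]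

open MeasureTheory ProbabilityTheory Filter Topology Real


instance stdGaussian_prob (q : ℕ) : IsProbabilityMeasure (stdGaussian q) :=
  Measure.isProbabilityMeasure_map (MeasurableEquiv.measurable _).aemeasurable

lemma aux_integrable_pi_prod {n : ℕ} {E : Fin n → Type*} [∀ i, MeasurableSpace (E i)]
    (μ : ∀ i, Measure (E i)) [∀ i, SigmaFinite (μ i)]
    {f : (i : Fin n) → E i → ℝ} (hf : ∀ i, Integrable (f i) (μ i)) :
    Integrable (fun x => ∏ i, f i (x i)) (Measure.pi μ) := by
  induction n with
  | zero =>
      simp only [Finset.univ_eq_empty, Finset.prod_empty, integrable_const_iff,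
        one_ne_zero, Measure.pi_empty_univ, ENNReal.one_lt_top, or_true, false_or]
      exact ⟨by simp [Measure.pi_empty_univ]⟩
  | succ n n_ih =>
      have h := ((measurePreserving_piFinSuccAbove μ 0).symm)
      rw [← h.integrable_comp_emb (MeasurableEquiv.measurableEmbedding _)]
      simp_rw [MeasurableEquiv.piFinSuccAbove_symm_apply, Fin.insertNthEquiv,
        Fin.prod_univ_succ, Fin.insertNth_zero]
      simp only [Fin.zero_succAbove, Function.comp_def, Fin.cons_zero, Fin.cons_succ]
      exact Integrable.mul_prod (hf 0) (n_ih _ (fun i => hf _))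

lemma aux_integrable_exp_abs_gaussian (s : ℝ) :
    Integrable (fun x => Real.exp (s * |x|)) (gaussianReal 0 1) := by
  rw [gaussianReal_of_var_ne_zero _ one_ne_zero,
    integrable_withDensity_iff (measurable_gaussianPDF _ _)
      (ae_of_all _ fun x => ENNReal.ofReal_lt_top)]
  have hmeas : AEStronglyMeasurable
      (fun x : ℝ => Real.exp (s * |x|) * (gaussianPDF 0 1 x).toReal) volume :=
    (((measurable_id.abs.const_mul s).exp.mul
      (measurable_gaussianPDF 0 1).ennreal_toReal)).aestronglyMeasurable
  refine Integrable.mono'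
    (((integrable_exp_neg_mul_sq (by norm_num : (0:ℝ) < 1/4)).const_mul
      ((Real.sqrt (2 * Real.pi))⁻¹ * Real.exp (s ^ 2)))) hmeas (ae_of_all _ fun x => ?_)
  have h0 : (gaussianPDF 0 1 x).toReal = gaussianPDFReal 0 1 x :=
    ENNReal.toReal_ofReal (gaussianPDFReal_nonneg _ _ _)
  rw [Real.norm_eq_abs, abs_of_nonneg (by positivity), h0]
  have h1 : gaussianPDFReal 0 1 x = (Real.sqrt (2 * Real.pi))⁻¹ * Real.exp (-x ^ 2 / 2) := by
    simp [gaussianPDFReal]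
  rw [h1]
  have h2 : Real.exp (s * |x|) * Real.exp (-x ^ 2 / 2)
      ≤ Real.exp (s ^ 2) * Real.exp (-(1 / 4) * x ^ 2) := by
    rw [← Real.exp_add, ← Real.exp_add]
    apply Real.exp_le_exp.mpr
    nlinarith [sq_abs x, sq_nonneg (|x| / 2 - s)]
  have h3 : (0:ℝ) ≤ (Real.sqrt (2 * Real.pi))⁻¹ := by positivity
  calc Real.exp (s * |x|) * ((Real.sqrt (2 * Real.pi))⁻¹ * Real.exp (-x ^ 2 / 2))
      = (Real.sqrt (2 * Real.pi))⁻¹ * (Real.exp (s * |x|) * Real.exp (-x ^ 2 / 2)) := by ring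
    _ ≤ (Real.sqrt (2 * Real.pi))⁻¹ * (Real.exp (s ^ 2) * Real.exp (-(1 / 4) * x ^ 2)) := by
        exact mul_le_mul_of_nonneg_left h2 h3
    _ = (Real.sqrt (2 * Real.pi))⁻¹ * Real.exp (s ^ 2) * Real.exp (-(1 / 4) * x ^ 2) := by ring

lemma aux_norm_le_sum_abs {q : ℕ} (x : Fin q → ℝ) :
    ‖(MeasurableEquiv.toLp 2 (Fin q → ℝ)) x‖ ≤ ∑ i, |x i| := by
  rw [MeasurableEquiv.coe_toLp]
  rw [EuclideanSpace.norm_eq]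
  have h1 : ∀ i : Fin q, ‖WithLp.toLp 2 x i‖ = |x i| := fun i => rfl
  simp_rw [h1]
  have h2 : ∑ i, |x i| ^ 2 ≤ (∑ i, |x i|) ^ 2 :=
    Finset.sum_sq_le_sq_sum_of_nonneg (fun i _ => abs_nonneg _)
  calc Real.sqrt (∑ i, |x i| ^ 2) ≤ Real.sqrt ((∑ i, |x i|) ^ 2) := Real.sqrt_le_sqrt h2
    _ = ∑ i, |x i| := Real.sqrt_sq (Finset.sum_nonneg fun i _ => abs_nonneg _)

lemma aux_integrable_exp_mul_norm (q : ℕ) (t : ℝ) :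
    Integrable (fun e => Real.exp (t * ‖e‖)) (stdGaussian q) := by
  unfold _root_.stdGaussian
  rw [integrable_map_equiv]
  simp only [Function.comp_def]
  have hmeas : AEStronglyMeasurable
      (fun x : Fin q → ℝ =>
        Real.exp (t * ‖(MeasurableEquiv.toLp 2 (Fin q → ℝ)) x‖))
      (Measure.pi fun _ => gaussianReal 0 1) :=
    (((MeasurableEquiv.toLp 2 (Fin q → ℝ)).measurable.norm.const_mul
      t).exp).aestronglyMeasurable
  refine Integrable.mono'
    (aux_integrable_pi_prod _ (f := fun _ x => Real.exp (|t| * |x|))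
      (fun _ => aux_integrable_exp_abs_gaussian |t|)) hmeas (ae_of_all _ fun x => ?_)
  rw [Real.norm_eq_abs, abs_of_nonneg (Real.exp_pos _).le]
  have hb : t * ‖(MeasurableEquiv.toLp 2 (Fin q → ℝ)) x‖ ≤ |t| * ∑ i, |x i| := by
    calc t * ‖(MeasurableEquiv.toLp 2 (Fin q → ℝ)) x‖
        ≤ |t| * ‖(MeasurableEquiv.toLp 2 (Fin q → ℝ)) x‖ := by
          exact mul_le_mul_of_nonneg_right (le_abs_self t) (norm_nonneg _)
      _ ≤ |t| * ∑ i, |x i| :=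
          mul_le_mul_of_nonneg_left (aux_norm_le_sum_abs x) (abs_nonneg t)
  calc Real.exp (t * ‖(MeasurableEquiv.toLp 2 (Fin q → ℝ)) x‖)
      ≤ Real.exp (|t| * ∑ i, |x i|) := Real.exp_le_exp.mpr hb
    _ = ∏ i, Real.exp (|t| * |x i|) := by
        rw [← Real.exp_sum, Finset.mul_sum]

lemma aux_integrable_norm (q : ℕ) : Integrable (fun e => ‖e‖) (stdGaussian q) := by
  refine Integrable.mono' (aux_integrable_exp_mul_norm q 1) ?_ (ae_of_all _ fun e => ?_)
  · exact continuous_norm.aestronglyMeasurable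
  · rw [Real.norm_eq_abs, abs_of_nonneg (norm_nonneg _), one_mul]
    linarith [Real.add_one_le_exp ‖e‖]

lemma aux_concentration {q : ℕ} {Ω : Type*} [MeasureSpace Ω]
    [IsProbabilityMeasure (ℙ : Measure Ω)]
    (ε : ℕ → Ω → EuclideanSpace ℝ (Fin q))
    (hεmeas : ∀ i, Measurable (ε i))
    (hindep : iIndepFun ε ℙ)
    (hgauss : ∀ i, Measure.map (ε i) ℙ = stdGaussian q)
    (f : EuclideanSpace ℝ (Fin q) → ℝ) (hf : Continuous f)
    {c : ℝ} (hc : 0 < c)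
    (hint : Integrable (fun e => Real.exp (c * |f e|)) (stdGaussian q))
    {s : ℝ} (hs : 0 < s) :
    ∃ β > (0:ℝ), ∀ N : ℕ, 1 ≤ N →
      (ℙ {ω | (∫ e, f e ∂(stdGaussian q)) + s
          ≤ (N : ℝ)⁻¹ * ∑ i ∈ Finset.range N, f (ε i ω)}).toReal ≤ Real.exp (-β * N) := by
  set ν := stdGaussian q with hν
  have hfint : Integrable f ν := by
    refine Integrable.mono' (hint.const_mul c⁻¹) hf.aestronglyMeasurable
      (ae_of_all _ fun e => ?_)
    rw [Real.norm_eq_abs]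
    have h1 : c * |f e| + 1 ≤ Real.exp (c * |f e|) := Real.add_one_le_exp _
    calc |f e| = c⁻¹ * (c * |f e|) := by field_simp
      _ ≤ c⁻¹ * Real.exp (c * |f e|) := by
          apply mul_le_mul_of_nonneg_left (by linarith) (by positivity)
  set m := ∫ e, f e ∂ν with hm
  set h : EuclideanSpace ℝ (Fin q) → ℝ := fun e => f e - m with hh
  have hhcont : Continuous h := hf.sub continuous_const
  have hhint : Integrable h ν := hfint.sub (integrable_const m)
  have hh0 : ∫ e, h e ∂ν = 0 := by
    rw [hh]
    rw [integral_sub hfint (integrable_const m)]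
    simp [integral_const, measure_univ, hm]
  have hMint : Integrable (fun e => Real.exp (c * |h e|)) ν := by
    refine Integrable.mono' (hint.const_mul (Real.exp (c * |m|)))
      ((continuous_const.mul hhcont.abs).rexp.aestronglyMeasurable) (ae_of_all _ fun e => ?_)
    rw [Real.norm_eq_abs, abs_of_nonneg (Real.exp_pos _).le, ← Real.exp_add]
    apply Real.exp_le_exp.mpr
    have : |h e| ≤ |f e| + |m| := by rw [hh]; exact (abs_sub _ _).trans (by simp)
    nlinarith [abs_nonneg (f e), abs_nonneg m, abs_nonneg (h e)]
  set M := ∫ e, Real.exp (c * |h e|) ∂ν with hM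
  have hM1 : 1 ≤ M := by
    rw [hM]
    calc (1:ℝ) = ∫ _e, (1:ℝ) ∂ν := by simp [measure_univ]
      _ ≤ _ := integral_mono (integrable_const 1) hMint
            (fun e => Real.one_le_exp (by positivity))
  set C := 16 / c ^ 2 * M with hC
  have hCpos : 0 < C := by
    apply mul_pos (by positivity); linarith
  have htint : ∀ t : ℝ, 0 ≤ t → t ≤ c → Integrable (fun e => Real.exp (t * h e)) ν := by
    intro t ht0 htc
    refine Integrable.mono' hMint ((continuous_const.mul hhcont).rexp.aestronglyMeasurable)
      (ae_of_all _ fun e => ?_)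
    rw [Real.norm_eq_abs, abs_of_nonneg (Real.exp_pos _).le]
    apply Real.exp_le_exp.mpr
    calc t * h e ≤ t * |h e| := mul_le_mul_of_nonneg_left (le_abs_self _) ht0
      _ ≤ c * |h e| := mul_le_mul_of_nonneg_right htc (abs_nonneg _)
  have hmgf : ∀ t : ℝ, 0 < t → t ≤ c / 2 → mgf h ν t ≤ 1 + C * t ^ 2 := by
    intro t ht0 htc
    have i1 : Integrable (fun e => 1 + t * h e) ν :=
      (integrable_const 1).add (hhint.const_mul t)
    have i2 : Integrable (fun e => 16 / c ^ 2 * t ^ 2 * Real.exp (c * |h e|)) ν :=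
      hMint.const_mul _
    have hint2 : Integrable (fun e => 1 + t * h e + 16 / c ^ 2 * t ^ 2
        * Real.exp (c * |h e|)) ν := i1.add i2
    have hptwise : ∀ e, Real.exp (t * h e) ≤ 1 + t * h e + 16 / c ^ 2 * t ^ 2
        * Real.exp (c * |h e|) := by
      intro e
      have e1 := aux_exp_quad (t * h e)
      have habs : |t * h e| = t * |h e| := by rw [abs_mul, abs_of_pos ht0]
      have e2 : Real.exp (t * |h e|) ≤ Real.exp (c / 2 * |h e|) :=
        Real.exp_le_exp.mpr (mul_le_mul_of_nonneg_right htc (abs_nonneg _))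
      have e3 : h e ^ 2 ≤ 16 / c ^ 2 * Real.exp (c / 2 * |h e|) := by
        have := aux_sq_le_exp (v := c / 2 * |h e|) (by positivity)
        have hsq : (c / 2 * |h e|) ^ 2 = c ^ 2 / 4 * h e ^ 2 := by
          rw [mul_pow, sq_abs]; ring
        rw [hsq] at this
        rw [div_mul_eq_mul_div, le_div_iff₀ (by positivity : (0:ℝ) < c ^ 2)]
        nlinarith
      have e4 : Real.exp (c / 2 * |h e|) * Real.exp (c / 2 * |h e|)
          = Real.exp (c * |h e|) := by rw [← Real.exp_add]; ring_nf
      have e5 : (t * h e) ^ 2 * Real.exp |t * h e|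
          ≤ 16 / c ^ 2 * t ^ 2 * Real.exp (c * |h e|) := by
        rw [habs]
        calc (t * h e) ^ 2 * Real.exp (t * |h e|)
            = t ^ 2 * (h e ^ 2 * Real.exp (t * |h e|)) := by ring
          _ ≤ t ^ 2 * ((16 / c ^ 2 * Real.exp (c / 2 * |h e|))
              * Real.exp (c / 2 * |h e|)) := by
              apply mul_le_mul_of_nonneg_left _ (sq_nonneg t)
              exact mul_le_mul e3 e2 (Real.exp_pos _).le (by positivity)
          _ = 16 / c ^ 2 * t ^ 2 * Real.exp (c * |h e|) := by
              rw [mul_assoc (16 / c ^ 2), e4]; ring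
      calc Real.exp (t * h e) ≤ 1 + t * h e + (t * h e) ^ 2 * Real.exp |t * h e| := e1
        _ ≤ 1 + t * h e + 16 / c ^ 2 * t ^ 2 * Real.exp (c * |h e|) := by linarith [e5]
    unfold ProbabilityTheory.mgf
    calc ∫ e, Real.exp (t * h e) ∂ν
        ≤ ∫ e, (1 + t * h e + 16 / c ^ 2 * t ^ 2 * Real.exp (c * |h e|)) ∂ν :=
          integral_mono (htint t ht0.le (htc.trans (by linarith))) hint2
            (fun e => hptwise e)
      _ = 1 + C * t ^ 2 := by
          rw [integral_add i1 i2, integral_add (integrable_const 1) (hhint.const_mul t),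
            integral_const, integral_const_mul, integral_const_mul, hh0, ← hM]
          simp [measure_univ, hC]; ring
  have hcgf : ∀ t : ℝ, 0 < t → t ≤ c / 2 → cgf h ν t ≤ C * t ^ 2 := by
    intro t ht0 htc
    have hpos : 0 < mgf h ν t := mgf_pos (htint t ht0.le (htc.trans (by linarith)))
    unfold ProbabilityTheory.cgf
    calc Real.log (mgf h ν t) ≤ mgf h ν t - 1 := Real.log_le_sub_one_of_pos hpos
      _ ≤ C * t ^ 2 := by linarith [hmgf t ht0 htc]
  set t := min (c / 2) (s / (2 * C)) with htdef
  have ht0 : 0 < t := lt_min (by positivity) (by positivity)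
  have htc : t ≤ c / 2 := min_le_left _ _
  have htsC : C * t ≤ s / 2 := by
    have h1 : t ≤ s / (2 * C) := min_le_right _ _
    rw [le_div_iff₀ (by positivity)] at h1
    nlinarith
  set β := t * s - C * t ^ 2 with hβdef
  have hβ : 0 < β := by nlinarith
  refine ⟨β, hβ, fun N hN => ?_⟩
  have hNpos : (0:ℝ) < N := by exact_mod_cast Nat.lt_of_lt_of_le Nat.zero_lt_one hN
  set Y : ℕ → Ω → ℝ := fun i ω => f (ε i ω) - m with hY
  have hYmeas : ∀ i, Measurable (Y i) :=
    fun i => (hf.measurable.comp (hεmeas i)).sub measurable_const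
  have hYindep : iIndepFun Y ℙ :=
    hindep.comp (fun _ x => f x - m) (fun _ => hf.measurable.sub measurable_const)
  have hgasm : ∀ u : ℝ, AEStronglyMeasurable (fun e => Real.exp (u * (f e - m))) ν :=
    fun u => ((continuous_const.mul hhcont).rexp).aestronglyMeasurable
  have hYint : ∀ i, Integrable (fun ω => Real.exp (t * Y i ω)) ℙ := by
    intro i
    have h1 : Integrable (fun e => Real.exp (t * (f e - m))) ν :=
      htint t ht0.le (htc.trans (by linarith))
    rw [← hgauss i] at h1
    exact (integrable_map_measure (by rw [hgauss i]; exact hgasm t)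
      (hεmeas i).aemeasurable).mp h1
  have hYcgf : ∀ i, cgf (Y i) ℙ t = cgf h ν t := by
    intro i
    unfold ProbabilityTheory.cgf ProbabilityTheory.mgf
    congr 1
    rw [← hgauss i, integral_map (hεmeas i).aemeasurable (by rw [hgauss i]; exact hgasm t)]
  have hXint : Integrable (fun ω => Real.exp (t * (∑ i ∈ Finset.range N, Y i) ω)) ℙ :=
    hYindep.integrable_exp_mul_sum hYmeas (fun i _ => hYint i)
  have hchern := measure_ge_le_exp_cgf (X := ∑ i ∈ Finset.range N, Y i) (μ := ℙ)
    ((N : ℝ) * s) ht0.le hXint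
  have hXcgf : cgf (∑ i ∈ Finset.range N, Y i) ℙ t = (N : ℝ) * cgf h ν t := by
    rw [hYindep.cgf_sum hYmeas (fun i _ => hYint i)]
    simp [hYcgf, Finset.sum_const, Finset.card_range]
  have hevent : {ω | m + s ≤ (N : ℝ)⁻¹ * ∑ i ∈ Finset.range N, f (ε i ω)}
      = {ω | (N : ℝ) * s ≤ (∑ i ∈ Finset.range N, Y i) ω} := by
    ext ω
    simp only [Set.mem_setOf_eq, Finset.sum_apply]
    have hsum : ∑ i ∈ Finset.range N, Y i ω
        = (∑ i ∈ Finset.range N, f (ε i ω)) - (N : ℝ) * m := by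
      rw [hY]
      rw [Finset.sum_sub_distrib, Finset.sum_const, Finset.card_range, nsmul_eq_mul]
    rw [hsum]
    have hN1 : (N : ℝ) * (N : ℝ)⁻¹ = 1 := mul_inv_cancel₀ hNpos.ne'
    constructor
    · intro hw
      have h2 := mul_le_mul_of_nonneg_left hw hNpos.le
      rw [mul_add, ← mul_assoc, hN1, one_mul] at h2
      linarith
    · intro hw
      have h2 := mul_le_mul_of_nonneg_left hw (inv_pos.mpr hNpos).le
      rw [mul_sub, ← mul_assoc, ← mul_assoc, inv_mul_cancel₀ hNpos.ne', one_mul,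
        one_mul] at h2
      nlinarith
  rw [hevent]
  refine hchern.trans ?_
  apply Real.exp_le_exp.mpr
  rw [hXcgf]
  have h3 : cgf h ν t ≤ C * t ^ 2 := hcgf t ht0 htc
  have h4 : (N : ℝ) * cgf h ν t ≤ (N : ℝ) * (C * t ^ 2) :=
    mul_le_mul_of_nonneg_left h3 hNpos.le
  have h5 : -β * (N : ℝ) = -t * ((N : ℝ) * s) + (N : ℝ) * (C * t ^ 2) := by
    rw [hβdef]; ring
  linarith

set_option maxHeartbeats 2000000 in
/-- **Theorem 1(3) (exponential convergence rate of SAA maximizers).**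
In the reparameterized MC acquisition function setting (`𝕏 ⊂ ℝ^d` compact,
`A (x, ε) = a (g (μ x + Λ x ε))` with `μ, Λ` continuously differentiable and `g, a`
Lipschitz), if the base samples are i.i.d. standard Gaussian `N(0, I_q)`, then for every
`δ > 0` there exist `K < ∞` and `β > 0` with
`ℙ(dist(x̂_N, 𝒳*) > δ) ≤ K e^{-β N}` for all `N ≥ 1`. -/
theorem saa_exponential_rate_mc_acqf
    {d q : ℕ} (K : Set (EuclideanSpace ℝ (Fin d))) (hK : IsCompact K) (hKne : K.Nonempty)
    (μ : EuclideanSpace ℝ (Fin d) → EuclideanSpace ℝ (Fin q))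
    (Λ : EuclideanSpace ℝ (Fin d) →
      (EuclideanSpace ℝ (Fin q) →L[ℝ] EuclideanSpace ℝ (Fin q)))
    (hμ : ContDiff ℝ 1 μ) (hΛ : ContDiff ℝ 1 Λ)
    (g : EuclideanSpace ℝ (Fin q) → EuclideanSpace ℝ (Fin q))
    (a : EuclideanSpace ℝ (Fin q) → ℝ)
    (Lg La : NNReal) (hg : LipschitzWith Lg g) (ha : LipschitzWith La a)
    (A : EuclideanSpace ℝ (Fin d) → EuclideanSpace ℝ (Fin q) → ℝ)
    (hA : ∀ x ε, A x ε = a (g (μ x + Λ x ε)))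
    -- i.i.d. standard Gaussian base samples
    {Ω : Type*} [MeasureSpace Ω] [IsProbabilityMeasure (ℙ : Measure Ω)]
    (ε : ℕ → Ω → EuclideanSpace ℝ (Fin q))
    (hεmeas : ∀ i, Measurable (ε i))
    (hindep : iIndepFun ε ℙ)
    (hgauss : ∀ i, Measure.map (ε i) ℙ = stdGaussian q)
    -- the true and sample-average acquisition functions
    (α : EuclideanSpace ℝ (Fin d) → ℝ)
    (hα : ∀ x, α x = ∫ e, A x e ∂(stdGaussian q))
    (αhat : ℕ → EuclideanSpace ℝ (Fin d) → Ω → ℝ)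
    (hαhat : ∀ N x ω, αhat N x ω = (N : ℝ)⁻¹ * ∑ i ∈ Finset.range N, A x (ε i ω))
    -- SAA maximizers over `K`
    (xhat : ℕ → Ω → EuclideanSpace ℝ (Fin d))
    (hxhatK : ∀ N ω, xhat N ω ∈ K)
    (hxhat : ∀ N ω, ∀ y ∈ K, αhat N y ω ≤ αhat N (xhat N ω) ω) :
    ∀ δ > (0 : ℝ), ∃ C : ℝ, ∃ β > (0 : ℝ), ∀ N : ℕ, 1 ≤ N →
      (ℙ {ω | Metric.infDist (xhat N ω) {x ∈ K | ∀ y ∈ K, α y ≤ α x} > δ}).toReal ≤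
        C * Real.exp (-β * N) := by

  intro δ hδ
  set ν := stdGaussian q with hν
  set S := {x ∈ K | ∀ y ∈ K, α y ≤ α x} with hS
  -- Lipschitz constant of a ∘ g
  set L : ℝ := (La : ℝ) * (Lg : ℝ) with hLdef
  have hL : 0 ≤ L := by positivity
  have hφ : ∀ u v, |a (g u) - a (g v)| ≤ L * ‖u - v‖ := by
    intro u v
    have h1 := (ha.comp hg).dist_le_mul u v
    rw [Real.dist_eq, dist_eq_norm] at h1
    simpa [hLdef, NNReal.coe_mul] using h1
  -- bounding ball
  obtain ⟨R, hKB⟩ := hK.isBounded.subset_closedBall 0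
  set B := Metric.closedBall (0 : EuclideanSpace ℝ (Fin d)) R with hB
  have hBconv : Convex ℝ B := convex_closedBall _ _
  have hBcomp : IsCompact B := isCompact_closedBall _ _
  -- derivative bounds
  have hμd : Differentiable ℝ μ := hμ.differentiable one_ne_zero
  have hΛd : Differentiable ℝ Λ := hΛ.differentiable one_ne_zero
  obtain ⟨Cμ₀, hCμ₀⟩ := hBcomp.exists_bound_of_continuousOn
    (hμ.continuous_fderiv one_ne_zero).continuousOn
  obtain ⟨CΛ₀, hCΛ₀⟩ := hBcomp.exists_bound_of_continuousOn
    (hΛ.continuous_fderiv one_ne_zero).continuousOn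
  obtain ⟨Cop₀, hCop₀⟩ := hBcomp.exists_bound_of_continuousOn hΛ.continuous.continuousOn
  obtain ⟨C₀₀, hC₀₀⟩ := hBcomp.exists_bound_of_continuousOn
    (ha.continuous.comp (hg.continuous.comp hμ.continuous)).continuousOn
  set Cμ := max Cμ₀ 0 with hCμdef
  set CΛ := max CΛ₀ 0 with hCΛdef
  set Cop := max Cop₀ 0 with hCopdef
  set C₀ := max C₀₀ 0 with hC₀def
  have hCμ : 0 ≤ Cμ := le_max_right _ _
  have hCΛ : 0 ≤ CΛ := le_max_right _ _
  have hCop : 0 ≤ Cop := le_max_right _ _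
  have hC₀ : 0 ≤ C₀ := le_max_right _ _
  have hμlip : ∀ x ∈ B, ∀ y ∈ B, ‖μ x - μ y‖ ≤ Cμ * ‖x - y‖ := by
    intro x hx y hy
    exact hBconv.norm_image_sub_le_of_norm_fderiv_le (fun z _ => hμd z)
      (fun z hz => le_trans (hCμ₀ z hz) (le_max_left _ _)) hy hx
  have hΛlip : ∀ x ∈ B, ∀ y ∈ B, ‖Λ x - Λ y‖ ≤ CΛ * ‖x - y‖ := by
    intro x hx y hy
    exact hBconv.norm_image_sub_le_of_norm_fderiv_le (fun z _ => hΛd z)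
      (fun z hz => le_trans (hCΛ₀ z hz) (le_max_left _ _)) hy hx
  have hΛop : ∀ x ∈ B, ‖Λ x‖ ≤ Cop := fun x hx =>
    le_trans (hCop₀ x hx) (le_max_left _ _)
  -- key pointwise estimates
  have key1 : ∀ x ∈ B, ∀ y ∈ B, ∀ e, |A x e - A y e|
      ≤ L * Cμ * ‖x - y‖ + L * CΛ * ‖x - y‖ * ‖e‖ := by
    intro x hx y hy e
    rw [hA, hA]
    have h1 := hφ (μ x + Λ x e) (μ y + Λ y e)
    have h2 : ‖(μ x + Λ x e) - (μ y + Λ y e)‖ ≤ ‖μ x - μ y‖ + ‖(Λ x - Λ y) e‖ := by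
      have : (μ x + Λ x e) - (μ y + Λ y e) = (μ x - μ y) + (Λ x - Λ y) e := by
        rw [ContinuousLinearMap.sub_apply]; abel
      rw [this]; exact norm_add_le _ _
    have h3 : ‖(Λ x - Λ y) e‖ ≤ (CΛ * ‖x - y‖) * ‖e‖ := by
      calc ‖(Λ x - Λ y) e‖ ≤ ‖Λ x - Λ y‖ * ‖e‖ := (Λ x - Λ y).le_opNorm e
        _ ≤ (CΛ * ‖x - y‖) * ‖e‖ :=
            mul_le_mul_of_nonneg_right (hΛlip x hx y hy) (norm_nonneg _)
    calc |a (g (μ x + Λ x e)) - a (g (μ y + Λ y e))|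
        ≤ L * ‖(μ x + Λ x e) - (μ y + Λ y e)‖ := h1
      _ ≤ L * (Cμ * ‖x - y‖ + CΛ * ‖x - y‖ * ‖e‖) := by
          apply mul_le_mul_of_nonneg_left _ hL
          calc ‖(μ x + Λ x e) - (μ y + Λ y e)‖ ≤ ‖μ x - μ y‖ + ‖(Λ x - Λ y) e‖ := h2
            _ ≤ Cμ * ‖x - y‖ + CΛ * ‖x - y‖ * ‖e‖ := by
                have := hμlip x hx y hy
                have h3' := h3
                rw [mul_assoc] at h3' ⊢
                linarith
      _ = L * Cμ * ‖x - y‖ + L * CΛ * ‖x - y‖ * ‖e‖ := by ring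
  have key2 : ∀ x ∈ B, ∀ e, |A x e| ≤ C₀ + L * Cop * ‖e‖ := by
    intro x hx e
    rw [hA]
    have h1 : |a (g (μ x + Λ x e)) - a (g (μ x))| ≤ L * (Cop * ‖e‖) := by
      have h2 := hφ (μ x + Λ x e) (μ x)
      have h3 : ‖(μ x + Λ x e) - μ x‖ = ‖Λ x e‖ := by congr 1; abel
      rw [h3] at h2
      refine h2.trans (mul_le_mul_of_nonneg_left ?_ hL)
      calc ‖Λ x e‖ ≤ ‖Λ x‖ * ‖e‖ := (Λ x).le_opNorm e
        _ ≤ Cop * ‖e‖ := mul_le_mul_of_nonneg_right (hΛop x hx) (norm_nonneg _)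
    have h4 : |a (g (μ x))| ≤ C₀ := by
      refine le_trans ?_ (le_max_left C₀₀ 0)
      simpa [Real.norm_eq_abs] using hC₀₀ x hx
    calc |a (g (μ x + Λ x e))|
        ≤ |a (g (μ x + Λ x e)) - a (g (μ x))| + |a (g (μ x))| := by
          have := abs_sub_abs_le_abs_sub (a (g (μ x + Λ x e))) (a (g (μ x)))
          have := abs_add_le (a (g (μ x + Λ x e)) - a (g (μ x))) (a (g (μ x)))
          calc |a (g (μ x + Λ x e))|
              = |(a (g (μ x + Λ x e)) - a (g (μ x))) + a (g (μ x))| := by ring_nf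
            _ ≤ _ := abs_add_le _ _
      _ ≤ L * (Cop * ‖e‖) + C₀ := add_le_add h1 h4
      _ = C₀ + L * Cop * ‖e‖ := by ring
  -- continuity of A x in e
  have hAcont : ∀ x, Continuous (fun e => A x e) := by
    intro x
    have : (fun e => A x e) = fun e => a (g (μ x + Λ x e)) := funext (hA x)
    rw [this]
    exact ha.continuous.comp (hg.continuous.comp (continuous_const.add (Λ x).continuous))
  -- integrability facts
  have hInt_norm : Integrable (fun e => ‖e‖) ν := aux_integrable_norm q
  set Inorm := ∫ e, ‖e‖ ∂ν with hInormdef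
  have hInorm0 : 0 ≤ Inorm := integral_nonneg (fun e => norm_nonneg e)
  have hbound_int : Integrable (fun e => C₀ + L * Cop * ‖e‖) ν :=
    (integrable_const C₀).add (hInt_norm.const_mul (L * Cop))
  have hAint : ∀ x ∈ B, Integrable (fun e => A x e) ν := by
    intro x hx
    refine Integrable.mono' hbound_int (hAcont x).aestronglyMeasurable
      (ae_of_all _ fun e => ?_)
    rw [Real.norm_eq_abs]; exact key2 x hx e
  have hAexp : ∀ x ∈ B, Integrable (fun e => Real.exp (1 * |A x e|)) ν := by
    intro x hx
    refine Integrable.mono'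
      ((aux_integrable_exp_mul_norm q (L * Cop)).const_mul (Real.exp C₀))
      ((continuous_const.mul (hAcont x).abs).rexp.aestronglyMeasurable) (ae_of_all _ fun e => ?_)
    rw [Real.norm_eq_abs, abs_of_nonneg (Real.exp_pos _).le, one_mul, ← Real.exp_add]
    exact Real.exp_le_exp.mpr (by linarith [key2 x hx e])
  -- Lipschitz bound for α
  have hαLip : ∀ x ∈ B, ∀ z ∈ B, |α x - α z|
      ≤ (L * Cμ + L * CΛ * Inorm) * ‖x - z‖ := by
    intro x hx z hz
    rw [hα, hα, ← integral_sub (hAint x hx) (hAint z hz)]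
    have hsubint : Integrable (fun e => A x e - A z e) ν :=
      (hAint x hx).sub (hAint z hz)
    have hbint : Integrable
        (fun e => L * Cμ * ‖x - z‖ + (L * CΛ * ‖x - z‖) * ‖e‖) ν :=
      (integrable_const _).add (hInt_norm.const_mul _)
    calc |∫ e, (A x e - A z e) ∂ν| ≤ ∫ e, |A x e - A z e| ∂ν := by
          simpa [Real.norm_eq_abs] using norm_integral_le_integral_norm
            (μ := ν) (fun e => A x e - A z e)
      _ ≤ ∫ e, (L * Cμ * ‖x - z‖ + (L * CΛ * ‖x - z‖) * ‖e‖) ∂ν := by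
          refine integral_mono hsubint.abs hbint (fun e => ?_)
          have := key1 x hx z hz e
          rw [mul_assoc (L * CΛ)] at this ⊢
          linarith
      _ = (L * Cμ + L * CΛ * Inorm) * ‖x - z‖ := by
          rw [integral_add (integrable_const _) (hInt_norm.const_mul _),
            integral_const, integral_const_mul, ← hInormdef]
          simp [measure_univ]; ring
  -- continuity of α on K
  have hαcont : ContinuousOn α K := by
    have hlip : LipschitzOnWith (L * Cμ + L * CΛ * Inorm).toNNReal α B := by
      apply LipschitzOnWith.of_dist_le_mul
      intro x hx y hy
      rw [Real.dist_eq, dist_eq_norm]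
      refine le_trans (hαLip x hx y hy) (mul_le_mul_of_nonneg_right ?_ (norm_nonneg _))
      exact Real.le_coe_toNNReal _
    exact (hlip.continuousOn).mono hKB
  -- maximizer of α
  obtain ⟨xstar, hxstarK, hxstarmax⟩ := hK.exists_isMaxOn hKne hαcont
  have hxstarS : xstar ∈ S := ⟨hxstarK, fun y hy => hxstarmax hy⟩
  -- the set of δ-far points
  set K' := K ∩ {x | δ ≤ Metric.infDist x S} with hK'
  have hK'comp : IsCompact K' :=
    hK.inter_right (isClosed_le continuous_const (Metric.continuous_infDist_pt S))
  by_cases hK'ne : K'.Nonempty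
  case neg =>
    refine ⟨1, 1, one_pos, fun N _ => ?_⟩
    have hempty : {ω | Metric.infDist (xhat N ω) S > δ} = ∅ := by
      ext ω
      simp only [Set.mem_setOf_eq, Set.mem_empty_iff_false, iff_false, not_lt]
      by_contra hcon
      push_neg at hcon
      exact hK'ne ⟨xhat N ω, hxhatK N ω, le_of_lt hcon⟩
    rw [hempty]
    simp only [measure_empty, ENNReal.toReal_zero, one_mul]
    positivity
  case pos =>
  obtain ⟨z0, hz0K', hz0max⟩ :=
    hK'comp.exists_isMaxOn hK'ne (hαcont.mono Set.inter_subset_left)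
  set m' := α z0 with hm'
  have hm'lt : m' < α xstar := by
    have hz0K : z0 ∈ K := hz0K'.1
    have hz0nS : z0 ∉ S := by
      intro hmem
      have := Metric.infDist_zero_of_mem hmem
      have := hz0K'.2
      simp only [Set.mem_setOf_eq] at this
      linarith
    have : ∃ y ∈ K, α z0 < α y := by
      by_contra hcon
      push_neg at hcon
      exact hz0nS ⟨hz0K, hcon⟩
    obtain ⟨y, hyK, hy⟩ := this
    exact lt_of_lt_of_le hy (hxstarmax hyK)
  set η := (α xstar - m') / 3 with hηdef
  have hη : 0 < η := by rw [hηdef]; linarith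
  set T := Inorm + 1 with hTdef
  have hT0 : 0 < T := by linarith
  set D := L * Cμ + L * CΛ * T with hDdef
  have hD0 : 0 ≤ D := by positivity
  set r := (2 * η / 3) / (2 * D + 1) with hrdef
  have hr : 0 < r := by positivity
  -- finite r-net of K with centers in K
  have htb := hK.totallyBounded
  rw [totallyBounded_iff_subset] at htb
  obtain ⟨t, htK, htfin, htcover⟩ := htb _ (Metric.dist_mem_uniformity hr)
  have htne : t.Nonempty := by
    obtain ⟨x0, hx0⟩ := hKne
    have := htcover hx0
    simp only [Set.mem_iUnion] at this
    obtain ⟨y, hy, -⟩ := this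
    exact ⟨y, hy⟩
  set tF := htfin.toFinset with htF
  have htFne : tF.Nonempty := by
    rw [htF, Set.Finite.toFinset_nonempty]; exact htne
  -- the bad events
  set Ep : EuclideanSpace ℝ (Fin d) → ℕ → Set Ω := fun z N =>
    {ω | α z + η / 3 ≤ (N : ℝ)⁻¹ * ∑ i ∈ Finset.range N, A z (ε i ω)} with hEp
  set Em : EuclideanSpace ℝ (Fin d) → ℕ → Set Ω := fun z N =>
    {ω | -α z + η / 3 ≤ (N : ℝ)⁻¹ * ∑ i ∈ Finset.range N, -A z (ε i ω)} with hEm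
  set FF : ℕ → Set Ω := fun N =>
    {ω | Inorm + 1 ≤ (N : ℝ)⁻¹ * ∑ i ∈ Finset.range N, ‖ε i ω‖} with hFF
  -- concentration at each center
  have hconc : ∀ z, z ∈ t → ∃ β, 0 < β ∧ ∀ N, 1 ≤ N →
      (ℙ (Ep z N)).toReal ≤ Real.exp (-β * N) ∧
      (ℙ (Em z N)).toReal ≤ Real.exp (-β * N) := by
    intro z hz
    have hzB : z ∈ B := hKB (htK hz)
    obtain ⟨βp, hβp, hp⟩ := aux_concentration ε hεmeas hindep hgauss
      (fun e => A z e) (hAcont z) one_pos (hAexp z hzB) (by positivity : 0 < η / 3)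
    obtain ⟨βm, hβm, hm2⟩ := aux_concentration ε hεmeas hindep hgauss
      (fun e => -A z e) (hAcont z).neg one_pos
      (by simpa [abs_neg] using hAexp z hzB) (by positivity : 0 < η / 3)
    refine ⟨min βp βm, lt_min hβp hβm, fun N hN => ⟨?_, ?_⟩⟩
    · have hbd := hp N hN
      have hNn : (0:ℝ) ≤ N := Nat.cast_nonneg N
      have hsets : Ep z N = {ω | (∫ e, A z e ∂(stdGaussian q)) + η / 3
          ≤ (N : ℝ)⁻¹ * ∑ i ∈ Finset.range N, A z (ε i ω)} := by
        rw [hEp]; simp only [← hα z, ← hν]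
      rw [hsets]
      refine hbd.trans (Real.exp_le_exp.mpr ?_)
      have : min βp βm ≤ βp := min_le_left _ _
      exact mul_le_mul_of_nonneg_right (neg_le_neg this) hNn
    · have hbd := hm2 N hN
      have hNn : (0:ℝ) ≤ N := Nat.cast_nonneg N
      have hmint : ∫ e, -A z e ∂(stdGaussian q) = -α z := by
        rw [integral_neg, ← hν, ← hα z]
      rw [hmint] at hbd
      have hsets : Em z N = {ω | -α z + η / 3
          ≤ (N : ℝ)⁻¹ * ∑ i ∈ Finset.range N, -A z (ε i ω)} := by rw [hEm]
      rw [hsets]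
      refine hbd.trans (Real.exp_le_exp.mpr ?_)
      have : min βp βm ≤ βm := min_le_right _ _
      exact mul_le_mul_of_nonneg_right (neg_le_neg this) hNn
  -- concentration for the norm average
  have hconcF : ∃ β, 0 < β ∧ ∀ N, 1 ≤ N →
      (ℙ (FF N)).toReal ≤ Real.exp (-β * N) := by
    obtain ⟨βB, hβB, hb⟩ := aux_concentration ε hεmeas hindep hgauss
      (fun e => ‖e‖) continuous_norm one_pos
      (by simpa [abs_of_nonneg (norm_nonneg _)] using aux_integrable_exp_mul_norm q 1)
      one_pos
    refine ⟨βB, hβB, fun N hN => ?_⟩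
    have hbd := hb N hN
    have hsets : FF N = {ω | (∫ e, ‖e‖ ∂(stdGaussian q)) + 1
        ≤ (N : ℝ)⁻¹ * ∑ i ∈ Finset.range N, ‖ε i ω‖} := by
      simp only [hFF, hInormdef, hν]
    rw [hsets]
    exact hbd
  choose! βf hβfpos hβfbound using hconc
  obtain ⟨βB, hβBpos, hβBbound⟩ := hconcF
  set β := min βB (tF.inf' htFne βf) with hβdef
  have hβpos : 0 < β := by
    refine lt_min hβBpos ?_
    rw [Finset.lt_inf'_iff]
    intro z hz
    exact hβfpos z (htfin.mem_toFinset.mp hz)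
  refine ⟨2 * tF.card + 1, β, hβpos, fun N hN => ?_⟩
  have hNpos : (0:ℝ) < N := by exact_mod_cast Nat.lt_of_lt_of_le Nat.zero_lt_one hN
  -- inclusion of the bad event
  have hincl : {ω | Metric.infDist (xhat N ω) S > δ}
      ⊆ (⋃ z ∈ tF, Ep z N ∪ Em z N) ∪ FF N := by
    intro ω hω
    by_contra hnot
    have hnotU : ∀ z ∈ tF, ω ∉ Ep z N ∪ Em z N := fun z hz hmem =>
      hnot (Set.mem_union_left _ (Set.mem_biUnion hz hmem))
    have hnotF : ω ∉ FF N := fun hmem => hnot (Set.mem_union_right _ hmem)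
    have hgood : ∀ z ∈ t, ω ∉ Ep z N ∧ ω ∉ Em z N := by
      intro z hz
      have h := hnotU z (htfin.mem_toFinset.mpr hz)
      rw [Set.mem_union] at h
      push_neg at h
      exact h
    -- average norm is controlled
    have hSN : (N : ℝ)⁻¹ * ∑ i ∈ Finset.range N, ‖ε i ω‖ < T := by
      have := hnotF
      simp only [hFF, Set.mem_setOf_eq, not_le] at this
      rw [hTdef]; exact this
    have hSN0 : 0 ≤ (N : ℝ)⁻¹ * ∑ i ∈ Finset.range N, ‖ε i ω‖ := by positivity
    -- uniform deviation bound
    have huni : ∀ x ∈ K, |αhat N x ω - α x| ≤ η := by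
      intro x hx
      have hcov := htcover hx
      simp only [Set.mem_iUnion] at hcov
      obtain ⟨z, hzt, hxz⟩ := hcov
      have hxz' : ‖x - z‖ < r := by
        rw [← dist_eq_norm]; exact hxz
      have hzK : z ∈ K := htK hzt
      have hzB : z ∈ B := hKB hzK
      have hxB : x ∈ B := hKB hx
      have hxzn : (0:ℝ) ≤ ‖x - z‖ := norm_nonneg _
      set SN := (N : ℝ)⁻¹ * ∑ i ∈ Finset.range N, ‖ε i ω‖ with hSNdef
      have b1 : |αhat N x ω - αhat N z ω| ≤ L * Cμ * r + L * CΛ * r * T := by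
        rw [hαhat, hαhat]
        have e1 : (N : ℝ)⁻¹ * ∑ i ∈ Finset.range N, A x (ε i ω)
            - (N : ℝ)⁻¹ * ∑ i ∈ Finset.range N, A z (ε i ω)
            = (N : ℝ)⁻¹ * ∑ i ∈ Finset.range N, (A x (ε i ω) - A z (ε i ω)) := by
          rw [Finset.sum_sub_distrib, mul_sub]
        rw [e1, abs_mul, abs_of_nonneg (inv_nonneg.mpr hNpos.le)]
        have e2 : |∑ i ∈ Finset.range N, (A x (ε i ω) - A z (ε i ω))|
            ≤ ∑ i ∈ Finset.range N, (L * Cμ * ‖x - z‖ + L * CΛ * ‖x - z‖ * ‖ε i ω‖) := by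
          refine (Finset.abs_sum_le_sum_abs _ _).trans (Finset.sum_le_sum fun i _ => ?_)
          exact key1 x hxB z hzB (ε i ω)
        have e3 : (N : ℝ)⁻¹ * ∑ i ∈ Finset.range N,
            (L * Cμ * ‖x - z‖ + L * CΛ * ‖x - z‖ * ‖ε i ω‖)
            = L * Cμ * ‖x - z‖ + L * CΛ * ‖x - z‖ * SN := by
          rw [Finset.sum_add_distrib, Finset.sum_const, Finset.card_range, nsmul_eq_mul,
            ← Finset.mul_sum, hSNdef]
          field_simp
        calc (N : ℝ)⁻¹ * |∑ i ∈ Finset.range N, (A x (ε i ω) - A z (ε i ω))|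
            ≤ (N : ℝ)⁻¹ * ∑ i ∈ Finset.range N,
              (L * Cμ * ‖x - z‖ + L * CΛ * ‖x - z‖ * ‖ε i ω‖) :=
              mul_le_mul_of_nonneg_left e2 (inv_nonneg.mpr hNpos.le)
          _ = L * Cμ * ‖x - z‖ + L * CΛ * ‖x - z‖ * SN := e3
          _ ≤ L * Cμ * r + L * CΛ * r * T := by
              have p1 : L * Cμ * ‖x - z‖ ≤ L * Cμ * r :=
                mul_le_mul_of_nonneg_left hxz'.le (by positivity)
              have p2 : L * CΛ * ‖x - z‖ * SN ≤ L * CΛ * r * T := by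
                have hLC : (0:ℝ) ≤ L * CΛ := by positivity
                have hmul : ‖x - z‖ * SN ≤ r * T := mul_le_mul hxz'.le hSN.le hSN0 hr.le
                calc L * CΛ * ‖x - z‖ * SN = (L * CΛ) * (‖x - z‖ * SN) := by ring
                  _ ≤ (L * CΛ) * (r * T) := mul_le_mul_of_nonneg_left hmul hLC
                  _ = L * CΛ * r * T := by ring
              linarith
      have b2 : |α x - α z| ≤ L * Cμ * r + L * CΛ * r * T := by
        refine (hαLip x hxB z hzB).trans ?_
        have hIT : Inorm ≤ T := by rw [hTdef]; linarith
        have q1 : (L * Cμ + L * CΛ * Inorm) * ‖x - z‖ ≤ (L * Cμ + L * CΛ * Inorm) * r :=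
          mul_le_mul_of_nonneg_left hxz'.le (by positivity)
        have q2 : (L * CΛ * Inorm) * r ≤ (L * CΛ * T) * r :=
          mul_le_mul_of_nonneg_right
            (mul_le_mul_of_nonneg_left hIT (by positivity : (0:ℝ) ≤ L * CΛ)) hr.le
        nlinarith [q1, q2]
      have b3 : |αhat N z ω - α z| ≤ η / 3 := by
        obtain ⟨hnp, hnm⟩ := hgood z hzt
        simp only [hEp, Set.mem_setOf_eq, not_le] at hnp
        simp only [hEm, Set.mem_setOf_eq, not_le] at hnm
        have hneg : ∑ i ∈ Finset.range N, -A z (ε i ω)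
            = -∑ i ∈ Finset.range N, A z (ε i ω) := by
          rw [Finset.sum_neg_distrib]
        rw [hneg] at hnm
        rw [hαhat, abs_le]
        constructor <;> nlinarith [inv_nonneg.mpr hNpos.le]
      have hr1 : r * (2 * D + 1) = 2 * η / 3 := by
        rw [hrdef]; field_simp
      have hDr : 2 * (L * Cμ * r + L * CΛ * r * T) ≤ 2 * η / 3 := by
        have : 2 * (L * Cμ * r + L * CΛ * r * T) = 2 * D * r := by rw [hDdef]; ring
        rw [this]
        nlinarith
      calc |αhat N x ω - α x|
          = |(αhat N x ω - αhat N z ω) + (αhat N z ω - α z) + (α z - α x)| := by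
            ring_nf
        _ ≤ |(αhat N x ω - αhat N z ω) + (αhat N z ω - α z)| + |α z - α x| :=
            abs_add_le _ _
        _ ≤ |αhat N x ω - αhat N z ω| + |αhat N z ω - α z| + |α z - α x| := by
            linarith [abs_add_le (αhat N x ω - αhat N z ω) (αhat N z ω - α z)]
        _ ≤ (L * Cμ * r + L * CΛ * r * T) + η / 3 + (L * Cμ * r + L * CΛ * r * T) := by
            rw [abs_sub_comm (α z) (α x)]
            exact add_le_add (add_le_add b1 b3) b2
        _ ≤ η := by nlinarith [hDr, hη]
    -- contradiction with maximality
    have h1 : αhat N xstar ω ≤ αhat N (xhat N ω) ω := hxhat N ω xstar hxstarK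
    have h2 := huni (xhat N ω) (hxhatK N ω)
    have h3 := huni xstar hxstarK
    have hω' : δ < Metric.infDist (xhat N ω) S := hω
    have hxhatK' : xhat N ω ∈ K' := ⟨hxhatK N ω, show δ ≤ _ from le_of_lt hω'⟩
    have h4 : α (xhat N ω) ≤ m' := hz0max hxhatK'
    rw [abs_le] at h2 h3
    have h5 : α xstar - m' = 3 * η := by rw [hηdef]; ring
    linarith [h2.1, h2.2, h3.1, h3.2]
  -- measure computation
  have step1 : ℙ {ω | Metric.infDist (xhat N ω) S > δ}
      ≤ (∑ z ∈ tF, (ℙ (Ep z N) + ℙ (Em z N))) + ℙ (FF N) := by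
    refine (measure_mono hincl).trans ?_
    refine (measure_union_le _ _).trans ?_
    gcongr
    refine (measure_biUnion_finset_le _ _).trans ?_
    exact Finset.sum_le_sum fun z _ => measure_union_le _ _
  have hRHSne : (∑ z ∈ tF, (ℙ (Ep z N) + ℙ (Em z N))) + ℙ (FF N) ≠ ⊤ := by
    refine ENNReal.add_ne_top.mpr ⟨?_, measure_ne_top _ _⟩
    refine ENNReal.sum_ne_top.mpr fun z _ => ?_
    exact ENNReal.add_ne_top.mpr ⟨measure_ne_top _ _, measure_ne_top _ _⟩
  have step2 : (ℙ {ω | Metric.infDist (xhat N ω) S > δ}).toReal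
      ≤ ((∑ z ∈ tF, (ℙ (Ep z N) + ℙ (Em z N))) + ℙ (FF N)).toReal :=
    ENNReal.toReal_mono hRHSne step1
  have step3 : ((∑ z ∈ tF, (ℙ (Ep z N) + ℙ (Em z N))) + ℙ (FF N)).toReal
      = (∑ z ∈ tF, ((ℙ (Ep z N)).toReal + (ℙ (Em z N)).toReal))
        + (ℙ (FF N)).toReal := by
    rw [ENNReal.toReal_add (ENNReal.sum_ne_top.mpr fun z _ =>
      ENNReal.add_ne_top.mpr ⟨measure_ne_top _ _, measure_ne_top _ _⟩)
      (measure_ne_top _ _), ENNReal.toReal_sum (fun z _ =>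
      ENNReal.add_ne_top.mpr ⟨measure_ne_top _ _, measure_ne_top _ _⟩)]
    congr 1
    exact Finset.sum_congr rfl fun z _ =>
      ENNReal.toReal_add (measure_ne_top _ _) (measure_ne_top _ _)
  have hβle : ∀ z ∈ tF, β ≤ βf z := by
    intro z hz
    exact le_trans (min_le_right _ _) (Finset.inf'_le _ hz)
  have hexp : ∀ z ∈ tF, (ℙ (Ep z N)).toReal + (ℙ (Em z N)).toReal
      ≤ 2 * Real.exp (-β * N) := by
    intro z hz
    have hzt : z ∈ t := htfin.mem_toFinset.mp hz
    obtain ⟨e1, e2⟩ := hβfbound z hzt N hN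
    have hmono : Real.exp (-βf z * N) ≤ Real.exp (-β * N) := by
      apply Real.exp_le_exp.mpr
      exact mul_le_mul_of_nonneg_right (neg_le_neg (hβle z hz)) hNpos.le
    linarith
  have hexpF : (ℙ (FF N)).toReal ≤ Real.exp (-β * N) := by
    refine (hβBbound N hN).trans (Real.exp_le_exp.mpr ?_)
    exact mul_le_mul_of_nonneg_right (neg_le_neg (min_le_left _ _)) hNpos.le
  calc (ℙ {ω | Metric.infDist (xhat N ω) S > δ}).toReal
      ≤ (∑ z ∈ tF, ((ℙ (Ep z N)).toReal + (ℙ (Em z N)).toReal))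
        + (ℙ (FF N)).toReal := by rw [← step3]; exact step2
    _ ≤ (∑ _z ∈ tF, 2 * Real.exp (-β * N)) + Real.exp (-β * N) := by
        exact add_le_add (Finset.sum_le_sum hexp) hexpF
    _ = (2 * tF.card + 1) * Real.exp (-β * N) := by
        rw [Finset.sum_const, nsmul_eq_mul]
        ring
end
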